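/- arXiv:2010.11737 — 6 statements merged into one kernel-verified Lean document; each statement's English description precedes it below -/
import Mathlib

section
/- Let sequences be given as follows: v_0 = x_0 ∈ X, y_0 ∈ Y, and for every k ≥ 1 set γ_k = 3/(k+2), α_k = 6κL/(k+1), ζ_k = L·D_X²/(384·k(k+1)), ε_k = κL·D_X²/(k(k+1)(k+2)), z_k = (1−γ_k)x_{k−1} + γ_k v_{k−1}, and suppose there exist y_k ∈ Y and v_k ∈ X such that (i) f(x_k, y_k) ≥ max_{y∈Y} f(x_k, y) − ε_k where x_k = (1−γ_k)x_{k−1} + γ_k v_k, and (ii) ⟨∇_x f(z_k, y_k) + α_k(v_k − v_{k−1}), v_k − x⟩ ≤ ζ_k for all x ∈ X. Define ȳ_k = (3/(k(k+1)(k+2))) Σ_{s=1}^k s(s+1) y_s. Then for every k ≥ 1: max_{y∈Y} f(x_k, y) − min_{x∈X} f(x, ȳ_k) ≤ 11κL·D_X² / ((k+1)(k+2)). -/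
open scoped RealInnerProductSpace BigOperators

lemma descent_aux {E : Type*} [NormedAddCommGroup E] [InnerProductSpace ℝ E] [CompleteSpace E]
    (φ : E → ℝ) (g : E → E) (hφ : ∀ w, HasGradientAt φ (g w) w)
    (s : Set E) (hs : Convex ℝ s) (L : ℝ) (hL : 0 ≤ L)
    (hLip : ∀ w ∈ s, ∀ w' ∈ s, ‖g w - g w'‖ ≤ L * ‖w - w'‖)
    (a b : E) (ha : a ∈ s) (hb : b ∈ s) :
    φ b ≤ φ a + ⟪g a, b - a⟫ + L * ‖b - a‖ ^ 2 := by
  set ψ : E → ℝ := fun w => φ w - ⟪g a, w⟫ with hψ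
  have hseg : segment ℝ a b ⊆ s := hs.segment_subset ha hb
  have hderiv : ∀ w ∈ segment ℝ a b,
      HasFDerivWithinAt ψ ((InnerProductSpace.toDual ℝ E) (g w) -
        (InnerProductSpace.toDual ℝ E) (g a)) (segment ℝ a b) w := by
    intro w hw
    have h1 : HasFDerivAt φ ((InnerProductSpace.toDual ℝ E) (g w)) w := (hφ w).hasFDerivAt
    have h2 : HasFDerivAt (fun u : E => ⟪g a, u⟫)
        ((InnerProductSpace.toDual ℝ E) (g a)) w := by
      have := ((InnerProductSpace.toDual ℝ E) (g a)).hasFDerivAt (x := w)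
      convert this using 1
      funext u
      simp [InnerProductSpace.toDual_apply_apply]
    exact ((h1.sub h2)).hasFDerivWithinAt
  have hbound : ∀ w ∈ segment ℝ a b,
      ‖(InnerProductSpace.toDual ℝ E) (g w) - (InnerProductSpace.toDual ℝ E) (g a)‖
        ≤ L * ‖b - a‖ := by
    intro w hw
    rw [← map_sub, (InnerProductSpace.toDual ℝ E).norm_map]
    have h1 : ‖g w - g a‖ ≤ L * ‖w - a‖ := hLip w (hseg hw) a ha
    have h2 : ‖w - a‖ ≤ ‖b - a‖ := by
      obtain ⟨p, q, hp, hq, hpq, rfl⟩ := hw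
      have hp1 : p = 1 - q := by linarith
      have : p • a + q • b - a = q • (b - a) := by
        rw [hp1]; module
      rw [this, norm_smul]
      have : ‖b - a‖ ≤ 1 * ‖b - a‖ := by simp
      calc ‖q‖ * ‖b - a‖ ≤ 1 * ‖b - a‖ := by
            apply mul_le_mul_of_nonneg_right _ (norm_nonneg _)
            rw [Real.norm_eq_abs, abs_of_nonneg hq]; linarith
        _ = ‖b - a‖ := one_mul _
    exact h1.trans (by nlinarith [norm_nonneg (w - a), norm_nonneg (b - a)])
  have key := (convex_segment a b).norm_image_sub_le_of_norm_hasFDerivWithin_le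
    hderiv hbound (left_mem_segment ℝ a b) (right_mem_segment ℝ a b)
  have h3 : ψ b - ψ a = φ b - φ a - ⟪g a, b - a⟫ := by
    simp only [hψ, inner_sub_right]; ring
  have h4 : ψ b - ψ a ≤ L * ‖b - a‖ * ‖b - a‖ := le_trans (le_abs_self _) key
  rw [h3] at h4
  nlinarith [sq_nonneg ‖b - a‖]

set_option maxHeartbeats 1600000 in
/-- Theorem 1, MPCGS convergence: under Assumption 1, if the iterates of
Mirror-Prox Conditional Gradient Sliding satisfy the approximate-maximizer condition (i)
and the Wolfe-gap condition (ii) with the prescribed parameters, then for every `k ≥ 1`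
the primal-dual gap of `(x_k, ȳ_k)` is at most `11κL·D_X²/((k+1)(k+2))`. -/
theorem mpcgs_convergence
    {n m : ℕ}
    (X : Set (EuclideanSpace ℝ (Fin n))) (Y : Set (EuclideanSpace ℝ (Fin m)))
    (hXconv : Convex ℝ X) (hXcomp : IsCompact X) (hXne : X.Nonempty)
    (hYconv : Convex ℝ Y) (hYcomp : IsCompact Y) (hYne : Y.Nonempty)
    (DX DY : ℝ)
    (hDX : ∀ x₁ ∈ X, ∀ x₂ ∈ X, ‖x₁ - x₂‖ ≤ DX)
    (hDY : ∀ y₁ ∈ Y, ∀ y₂ ∈ Y, ‖y₁ - y₂‖ ≤ DY)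
    (f : EuclideanSpace ℝ (Fin n) → EuclideanSpace ℝ (Fin m) → ℝ)
    (gx : EuclideanSpace ℝ (Fin n) → EuclideanSpace ℝ (Fin m) → EuclideanSpace ℝ (Fin n))
    (gy : EuclideanSpace ℝ (Fin n) → EuclideanSpace ℝ (Fin m) → EuclideanSpace ℝ (Fin m))
    (hgx : ∀ x y, HasGradientAt (fun x' => f x' y) (gx x y) x)
    (hgy : ∀ x y, HasGradientAt (fun y' => f x y') (gy x y) y)
    (L μ κ : ℝ) (hμ : 0 < μ) (hμL : μ ≤ L) (hκ : κ = L / μ)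
    (hsmooth : ∀ x₁ ∈ X, ∀ x₂ ∈ X, ∀ y₁ ∈ Y, ∀ y₂ ∈ Y,
      ‖gx x₁ y₁ - gx x₂ y₂‖ ^ 2 + ‖gy x₁ y₁ - gy x₂ y₂‖ ^ 2 ≤
        L ^ 2 * (‖x₁ - x₂‖ ^ 2 + ‖y₁ - y₂‖ ^ 2))
    (hconv : ∀ y ∈ Y, ∀ x₁ ∈ X, ∀ x₂ ∈ X,
      f x₁ y - f x₂ y ≥ ⟪gx x₂ y, x₁ - x₂⟫)
    (hconc : ∀ x ∈ X, ∀ y₁ ∈ Y, ∀ y₂ ∈ Y,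
      f x y₁ - f x y₂ ≤ ⟪gy x y₂, y₁ - y₂⟫ - μ / 2 * ‖y₁ - y₂‖ ^ 2)
    -- parameter sequences
    (γ α ζ ε : ℕ → ℝ)
    (hγ : ∀ k, γ k = 3 / ((k : ℝ) + 2))
    (hα : ∀ k, α k = 6 * κ * L / ((k : ℝ) + 1))
    (hζ : ∀ k, ζ k = L * DX ^ 2 / (384 * (k : ℝ) * ((k : ℝ) + 1)))
    (hε : ∀ k, ε k = κ * L * DX ^ 2 / ((k : ℝ) * ((k : ℝ) + 1) * ((k : ℝ) + 2)))
    -- iterate sequences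
    (x v z : ℕ → EuclideanSpace ℝ (Fin n)) (y : ℕ → EuclideanSpace ℝ (Fin m))
    (hx0 : x 0 ∈ X) (hv0 : v 0 = x 0) (hy0 : y 0 ∈ Y)
    (hvX : ∀ k, 1 ≤ k → v k ∈ X) (hyY : ∀ k, 1 ≤ k → y k ∈ Y)
    (hz : ∀ k, 1 ≤ k → z k = (1 - γ k) • x (k - 1) + γ k • v (k - 1))
    (hxk : ∀ k, 1 ≤ k → x k = (1 - γ k) • x (k - 1) + γ k • v k)
    -- (i): y_k is an ε_k-approximate maximizer of f(x_k, ·)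
    (hmax : ∀ k, 1 ≤ k → ∀ y' ∈ Y, f (x k) (y k) ≥ f (x k) y' - ε k)
    -- (ii): Wolfe-gap condition from the CndG procedure
    (hwolfe : ∀ k, 1 ≤ k → ∀ x' ∈ X,
      ⟪gx (z k) (y k) + α k • (v k - v (k - 1)), v k - x'⟫ ≤ ζ k)
    -- the averaged dual iterate
    (ybar : ℕ → EuclideanSpace ℝ (Fin m))
    (hybar : ∀ k, ybar k = (3 / ((k : ℝ) * ((k : ℝ) + 1) * ((k : ℝ) + 2))) •
      ∑ s ∈ Finset.Icc 1 k, ((s : ℝ) * ((s : ℝ) + 1)) • y s) :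
    ∀ k, 1 ≤ k → ∀ y' ∈ Y, ∀ x' ∈ X,
      f (x k) y' - f x' (ybar k) ≤
        11 * κ * L * DX ^ 2 / (((k : ℝ) + 1) * ((k : ℝ) + 2)) := by
  intro K hK y' hy' x' hx'
  have hL0 : 0 < L := lt_of_lt_of_le hμ hμL
  have hκ1 : 1 ≤ κ := by rw [hκ, le_div_iff₀ hμ]; linarith
  have hκ0 : 0 < κ := lt_of_lt_of_le one_pos hκ1
  have hDX0 : 0 ≤ DX := by
    obtain ⟨x0, hx0'⟩ := hXne
    have := hDX x0 hx0' x0 hx0'; simpa using this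
  have hP : 0 ≤ κ * L * DX ^ 2 := by positivity
  -- memberships
  have hvXall : ∀ j, v j ∈ X := by
    intro j
    match j with
    | 0 => rw [hv0]; exact hx0
    | (i+1) => exact hvX _ (Nat.succ_le_succ (Nat.zero_le _))
  have hγ0 : ∀ j : ℕ, 0 ≤ γ j := by
    intro j; rw [hγ]; positivity
  have hγ1 : ∀ j : ℕ, 1 ≤ j → γ j ≤ 1 := by
    intro j hj; rw [hγ]
    rw [div_le_one (by positivity)]
    have : (1:ℝ) ≤ (j:ℝ) := Nat.one_le_cast.mpr hj
    linarith
  have hxXall : ∀ j, x j ∈ X := by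
    intro j
    induction j with
    | zero => exact hx0
    | succ i ih =>
      have h1 : 1 ≤ i + 1 := Nat.succ_le_succ (Nat.zero_le _)
      have hxe := hxk (i+1) h1
      simp only [Nat.add_sub_cancel] at hxe
      rw [hxe]
      exact hXconv ih (hvXall (i+1)) (by linarith [hγ1 (i+1) (Nat.succ_le_succ (Nat.zero_le _))]) (hγ0 (i+1)) (by ring)
  have hzXall : ∀ j, 1 ≤ j → z j ∈ X := by
    intro j hj
    rw [hz j hj]
    exact hXconv (hxXall _) (hvXall _) (by linarith [hγ1 j hj]) (hγ0 j) (by ring)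
  -- Lipschitz gradient in x
  have hLipx : ∀ yy ∈ Y, ∀ a ∈ X, ∀ b ∈ X, ‖gx a yy - gx b yy‖ ≤ L * ‖a - b‖ := by
    intro yy hyy a haX b hbX
    have h := hsmooth a haX b hbX yy hyy yy hyy
    simp only [sub_self, norm_zero] at h
    nlinarith [norm_nonneg (gx a yy - gx b yy), norm_nonneg (gy a yy - gy b yy),
      norm_nonneg (a - b), mul_nonneg hL0.le (norm_nonneg (a - b))]
  have hdesc : ∀ yy ∈ Y, ∀ a ∈ X, ∀ b ∈ X,
      f b yy ≤ f a yy + ⟪gx a yy, b - a⟫ + L * ‖b - a‖ ^ 2 := by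
    intro yy hyy a haX b hbX
    exact descent_aux (fun w => f w yy) (fun w => gx w yy) (fun w => hgx w yy)
      X hXconv L hL0.le (fun w hw w' hw' => hLipx yy hyy w hw w' hw') a b haX hbX
  -- the one-step inequality
  have step : ∀ j : ℕ,
      (((j:ℝ)+1)*((j:ℝ)+2)*((j:ℝ)+3)) * f (x (j+1)) (y (j+1)) ≤
      ((j:ℝ)*((j:ℝ)+1)*((j:ℝ)+2)) * (f (x j) (y j) + ε j)
      + 3*((j:ℝ)+1)*((j:ℝ)+2) *
          ((f (z (j+1)) (y (j+1)) + ⟪gx (z (j+1)) (y (j+1)), x' - z (j+1)⟫) + ζ (j+1))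
      + 9*κ*L*((j:ℝ)+1) * (‖x' - v j‖^2 - ‖x' - v (j+1)‖^2) := by
    intro j
    have hj1 : 1 ≤ j + 1 := Nat.succ_le_succ (Nat.zero_le _)
    have hj0 : (0:ℝ) ≤ (j:ℝ) := Nat.cast_nonneg j
    have hd2 : ((j:ℝ)+2) ≠ 0 := by positivity
    have hd3 : ((j:ℝ)+3) ≠ 0 := by positivity
    have hγv : γ (j+1) = 3 / ((j:ℝ)+3) := by
      rw [hγ]; push_cast; ring_nf
    have hαv : α (j+1) = 6*κ*L / ((j:ℝ)+2) := by
      rw [hα]; push_cast; ring_nf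
    have hγj0 : 0 ≤ γ (j+1) := hγ0 _
    have hγj1 : γ (j+1) ≤ 1 := hγ1 _ hj1
    have hxe : x (j+1) = (1 - γ (j+1)) • x j + γ (j+1) • v (j+1) := by
      have := hxk (j+1) hj1; simpa using this
    have hze : z (j+1) = (1 - γ (j+1)) • x j + γ (j+1) • v j := by
      have := hz (j+1) hj1; simpa using this
    set gs := gx (z (j+1)) (y (j+1)) with hgs
    have hvec1 : x (j+1) - z (j+1) = γ (j+1) • (v (j+1) - v j) := by
      rw [hxe, hze]; module
    have hvec2 : x (j+1) - z (j+1) =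
        (1 - γ (j+1)) • (x j - z (j+1)) + γ (j+1) • (v (j+1) - z (j+1)) := by
      rw [hxe, hze]; module
    have hdescj : f (x (j+1)) (y (j+1)) ≤ f (z (j+1)) (y (j+1)) +
        ⟪gs, x (j+1) - z (j+1)⟫ + L * ‖x (j+1) - z (j+1)‖ ^ 2 :=
      hdesc (y (j+1)) (hyY _ hj1) (z (j+1)) (hzXall _ hj1) (x (j+1)) (hxXall _)
    have hnorm : ‖x (j+1) - z (j+1)‖ ^ 2 = γ (j+1)^2 * ‖v (j+1) - v j‖ ^ 2 := by
      rw [hvec1, norm_smul, Real.norm_eq_abs, abs_of_nonneg hγj0, mul_pow]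
    have hip : ⟪gs, x (j+1) - z (j+1)⟫ =
        (1 - γ (j+1)) * ⟪gs, x j - z (j+1)⟫ + γ (j+1) * ⟪gs, v (j+1) - z (j+1)⟫ := by
      rw [hvec2, inner_add_right, real_inner_smul_right, real_inner_smul_right]
    have hconvj : ⟪gs, x j - z (j+1)⟫ ≤ f (x j) (y (j+1)) - f (z (j+1)) (y (j+1)) :=
      hconv (y (j+1)) (hyY _ hj1) (x j) (hxXall j) (z (j+1)) (hzXall _ hj1)
    have hipG : ⟪gs, v (j+1) - z (j+1)⟫ = ⟪gs, v (j+1) - x'⟫ + ⟪gs, x' - z (j+1)⟫ := by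
      rw [← inner_add_right]
      congr 1
      module
    have hwolfej : ⟪gs, v (j+1) - x'⟫ + α (j+1) * ⟪v (j+1) - v j, v (j+1) - x'⟫ ≤ ζ (j+1) := by
      have h := hwolfe (j+1) hj1 x' hx'
      simp only [Nat.add_sub_cancel] at h
      rw [inner_add_left, real_inner_smul_left] at h
      exact h
    have hthree : ‖x' - v j‖^2 = ‖v (j+1) - v j‖^2
        - 2 * ⟪v (j+1) - v j, v (j+1) - x'⟫ + ‖x' - v (j+1)‖^2 := by
      have h1 : x' - v j = (v (j+1) - v j) - (v (j+1) - x') := by module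
      have h3 : ‖v (j+1) - x'‖ = ‖x' - v (j+1)‖ := norm_sub_rev _ _
      rw [h1, norm_sub_sq_real, h3]
    have hI4 : ⟪gs, v (j+1) - x'⟫ ≤ ζ (j+1)
        - α (j+1) * ((‖x' - v (j+1)‖^2 - ‖x' - v j‖^2 + ‖v (j+1) - v j‖^2)/2) := by
      have hq : ⟪v (j+1) - v j, v (j+1) - x'⟫ =
          (‖x' - v (j+1)‖^2 - ‖x' - v j‖^2 + ‖v (j+1) - v j‖^2)/2 := by linarith
      rw [hq] at hwolfej
      linarith
    have hI4' : γ (j+1) * ⟪gs, v (j+1) - x'⟫ ≤ γ (j+1) * (ζ (j+1)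
        - α (j+1) * ((‖x' - v (j+1)‖^2 - ‖x' - v j‖^2 + ‖v (j+1) - v j‖^2)/2)) :=
      mul_le_mul_of_nonneg_left hI4 hγj0
    have hC' : (1 - γ (j+1)) * ⟪gs, x j - z (j+1)⟫ ≤
        (1 - γ (j+1)) * (f (x j) (y (j+1)) - f (z (j+1)) (y (j+1))) :=
      mul_le_mul_of_nonneg_left hconvj (by linarith)
    have hcore : f (x (j+1)) (y (j+1)) ≤
        (1 - γ (j+1)) * f (x j) (y (j+1))
        + γ (j+1) * (f (z (j+1)) (y (j+1)) + ⟪gs, x' - z (j+1)⟫)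
        + γ (j+1) * ζ (j+1)
        + (γ (j+1) * α (j+1) / 2) * (‖x' - v j‖^2 - ‖x' - v (j+1)‖^2)
        + (L * γ (j+1)^2 - γ (j+1) * α (j+1) / 2) * ‖v (j+1) - v j‖^2 := by
      rw [hip, hnorm, hipG] at hdescj
      linarith [hdescj, hC', hI4']
    set θ : ℝ := ((j:ℝ)+1)*((j:ℝ)+2)*((j:ℝ)+3) with hθd
    have hθ0 : 0 ≤ θ := by positivity
    have hmul := mul_le_mul_of_nonneg_left hcore hθ0
    have hc1 : θ * (γ (j+1) * ((f (z (j+1)) (y (j+1)) + ⟪gs, x' - z (j+1)⟫) + ζ (j+1))) =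
        3*((j:ℝ)+1)*((j:ℝ)+2) * ((f (z (j+1)) (y (j+1)) + ⟪gs, x' - z (j+1)⟫) + ζ (j+1)) := by
      rw [hγv, hθd]; field_simp
    have hc2 : θ * ((γ (j+1) * α (j+1) / 2) * (‖x' - v j‖^2 - ‖x' - v (j+1)‖^2)) =
        9*κ*L*((j:ℝ)+1) * (‖x' - v j‖^2 - ‖x' - v (j+1)‖^2) := by
      rw [hγv, hαv, hθd]; field_simp; ring
    have hc3 : θ * ((L * γ (j+1)^2 - γ (j+1) * α (j+1) / 2) * ‖v (j+1) - v j‖^2) ≤ 0 := by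
      have he : θ * (L * γ (j+1)^2 - γ (j+1) * α (j+1) / 2) =
          9*((j:ℝ)+1)*L*(((j:ℝ)+2)/((j:ℝ)+3) - κ) := by
        rw [hγv, hαv, hθd]; field_simp; ring
      have hfr : ((j:ℝ)+2)/((j:ℝ)+3) ≤ 1 := by
        rw [div_le_one (by positivity)]; linarith
      have hcoef : θ * (L * γ (j+1)^2 - γ (j+1) * α (j+1) / 2) ≤ 0 := by
        rw [he]
        apply mul_nonpos_of_nonneg_of_nonpos (by positivity)
        linarith
      calc θ * ((L * γ (j+1)^2 - γ (j+1) * α (j+1) / 2) * ‖v (j+1) - v j‖^2)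
          = (θ * (L * γ (j+1)^2 - γ (j+1) * α (j+1) / 2)) * ‖v (j+1) - v j‖^2 := by ring
        _ ≤ 0 := mul_nonpos_of_nonpos_of_nonneg hcoef (sq_nonneg _)
    have hd : θ * ((1 - γ (j+1)) * f (x j) (y (j+1))) ≤
        ((j:ℝ)*((j:ℝ)+1)*((j:ℝ)+2)) * (f (x j) (y j) + ε j) := by
      have hc0 : θ * (1 - γ (j+1)) = (j:ℝ)*((j:ℝ)+1)*((j:ℝ)+2) := by
        rw [hγv, hθd]; field_simp; ring
      rcases Nat.eq_zero_or_pos j with hj | hj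
      · subst hj
        norm_num at hc0 ⊢
        rw [hc0]
        norm_num
      · have hyj : y j ∈ Y := hyY j hj
        have hmj := hmax j hj (y (j+1)) (hyY _ hj1)
        have hθj0 : (0:ℝ) ≤ (j:ℝ)*((j:ℝ)+1)*((j:ℝ)+2) := by positivity
        have h1 : f (x j) (y (j+1)) ≤ f (x j) (y j) + ε j := by linarith
        calc θ * ((1 - γ (j+1)) * f (x j) (y (j+1)))
            = ((j:ℝ)*((j:ℝ)+1)*((j:ℝ)+2)) * f (x j) (y (j+1)) := by
              rw [← hc0]; ring
          _ ≤ ((j:ℝ)*((j:ℝ)+1)*((j:ℝ)+2)) * (f (x j) (y j) + ε j) :=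
              mul_le_mul_of_nonneg_left h1 hθj0
    have hdistrib : θ * ((1 - γ (j+1)) * f (x j) (y (j+1))
        + γ (j+1) * (f (z (j+1)) (y (j+1)) + ⟪gs, x' - z (j+1)⟫)
        + γ (j+1) * ζ (j+1)
        + (γ (j+1) * α (j+1) / 2) * (‖x' - v j‖^2 - ‖x' - v (j+1)‖^2)
        + (L * γ (j+1)^2 - γ (j+1) * α (j+1) / 2) * ‖v (j+1) - v j‖^2) =
        θ * ((1 - γ (j+1)) * f (x j) (y (j+1)))
        + θ * (γ (j+1) * ((f (z (j+1)) (y (j+1)) + ⟪gs, x' - z (j+1)⟫) + ζ (j+1)))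
        + θ * ((γ (j+1) * α (j+1) / 2) * (‖x' - v j‖^2 - ‖x' - v (j+1)‖^2))
        + θ * ((L * γ (j+1)^2 - γ (j+1) * α (j+1) / 2) * ‖v (j+1) - v j‖^2) := by ring
    linarith [hmul, hdistrib, hd, hc1, hc2, hc3]
  -- helper facts
  have hADX : ∀ s : ℕ, ‖x' - v s‖^2 ≤ DX^2 := by
    intro s
    have h := hDX x' hx' (v s) (hvXall s)
    nlinarith [norm_nonneg (x' - v s)]
  have e1 : L * DX^2 ≤ κ * L * DX^2 := by nlinarith [sq_nonneg DX]
  have eκL : 0 ≤ κ * L := mul_nonneg hκ0.le hL0.le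
  -- main induction
  have hQ : ∀ j : ℕ, 1 ≤ j →
      ((j:ℝ)*((j:ℝ)+1)*((j:ℝ)+2)) * f (x j) (y j) ≤
      3 * ∑ s ∈ Finset.Icc 1 j, ((s:ℝ)*((s:ℝ)+1)) *
          (f (z s) (y s) + ⟪gx (z s) (y s), x' - z s⟫)
      + ((1281/128)*(j:ℝ) - 1) * (κ*L*DX^2) - 9*κ*L*(j:ℝ) * ‖x' - v j‖^2 := by
    intro j hj
    induction j, hj using Nat.le_induction with
    | base =>
      have h := step 0
      simp only [zero_add, Nat.cast_zero] at h
      have hζ1 : ζ 1 = L * DX^2 / 768 := by rw [hζ]; norm_num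
      have e2 : 9*κ*L*‖x' - v 0‖^2 ≤ 9*κ*L*DX^2 := by
        have := hADX 0
        nlinarith [eκL]
      rw [hζ1] at h
      have hsumone : ∑ s ∈ Finset.Icc (1:ℕ) 1, ((s:ℝ)*((s:ℝ)+1)) *
          (f (z s) (y s) + ⟪gx (z s) (y s), x' - z s⟫)
          = 2 * (f (z 1) (y 1) + ⟪gx (z 1) (y 1), x' - z 1⟫) := by
        rw [Finset.Icc_self, Finset.sum_singleton]
        norm_num
      rw [hsumone]
      push_cast
      nlinarith [h, e1, e2]
    | succ j hj ih =>
      have h := step j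
      have hj1 : (1:ℝ) ≤ (j:ℝ) := Nat.one_le_cast.mpr hj
      have hεv : ((j:ℝ)*((j:ℝ)+1)*((j:ℝ)+2)) * ε j = κ*L*DX^2 := by
        rw [hε]
        have h1 : (j:ℝ) ≠ 0 := by linarith
        have h2 : ((j:ℝ)+1) ≠ 0 := by linarith
        have h3 : ((j:ℝ)+2) ≠ 0 := by linarith
        field_simp
      have hζv : 3*((j:ℝ)+1)*((j:ℝ)+2) * ζ (j+1) = L*DX^2/128 := by
        rw [hζ]
        push_cast
        have h2 : ((j:ℝ)+1) ≠ 0 := by linarith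
        have h3 : ((j:ℝ)+2) ≠ 0 := by linarith
        field_simp
        ring
      have e2 : 9*κ*L*‖x' - v j‖^2 ≤ 9*κ*L*DX^2 := by
        have := hADX j
        nlinarith [eκL]
      have hsum : ∑ s ∈ Finset.Icc 1 (j+1), ((s:ℝ)*((s:ℝ)+1)) *
            (f (z s) (y s) + ⟪gx (z s) (y s), x' - z s⟫)
          = (∑ s ∈ Finset.Icc 1 j, ((s:ℝ)*((s:ℝ)+1)) *
            (f (z s) (y s) + ⟪gx (z s) (y s), x' - z s⟫))
          + (((j:ℝ)+1)*((j:ℝ)+2)) * (f (z (j+1)) (y (j+1)) + ⟪gx (z (j+1)) (y (j+1)), x' - z (j+1)⟫) := by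
        rw [Finset.sum_Icc_succ_top (Nat.succ_le_succ (Nat.zero_le j))]
        push_cast
        ring
      push_cast
      rw [hsum]
      push_cast at ih ⊢
      nlinarith [h, ih, hεv, hζv, e1, e2]
  -- assembly
  have hKR : (1:ℝ) ≤ (K:ℝ) := Nat.one_le_cast.mpr hK
  have hθK0 : (0:ℝ) < (K:ℝ)*((K:ℝ)+1)*((K:ℝ)+2) :=
    mul_pos (mul_pos (by linarith) (by linarith)) (by linarith)
  have hθKne : ((K:ℝ)*((K:ℝ)+1)*((K:ℝ)+2)) ≠ 0 := ne_of_gt hθK0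
  -- sum of weights
  have hsumid : ∀ N : ℕ, ∑ s ∈ Finset.Icc 1 N, ((s:ℝ)*((s:ℝ)+1))
      = (N:ℝ)*((N:ℝ)+1)*((N:ℝ)+2)/3 := by
    intro N
    induction N with
    | zero => simp
    | succ i ihN =>
      rw [Finset.sum_Icc_succ_top (Nat.succ_le_succ (Nat.zero_le i)), ihN]
      push_cast
      ring
  -- weights
  set w : ℕ → ℝ := fun s => 3*(s:ℝ)*((s:ℝ)+1)/((K:ℝ)*((K:ℝ)+1)*((K:ℝ)+2)) with hwdef
  have hw0 : ∀ s : ℕ, 0 ≤ w s := by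
    intro s; rw [hwdef]; positivity
  have hwsum : ∑ s ∈ Finset.Icc 1 K, w s = 1 := by
    simp only [hwdef]
    rw [show (fun s : ℕ => 3*(s:ℝ)*((s:ℝ)+1)/((K:ℝ)*((K:ℝ)+1)*((K:ℝ)+2)))
      = (fun s : ℕ => (3*((s:ℝ)*((s:ℝ)+1)))/((K:ℝ)*((K:ℝ)+1)*((K:ℝ)+2))) from by
        funext s; ring]
    rw [← Finset.sum_div, ← Finset.mul_sum, hsumid K]
    field_simp
  have hybar' : ybar K = ∑ s ∈ Finset.Icc 1 K, w s • y s := by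
    rw [hybar K, Finset.smul_sum]
    apply Finset.sum_congr rfl
    intro s hs
    rw [smul_smul]
    congr 1
    rw [hwdef]
    ring
  have hybarY : ybar K ∈ Y := by
    rw [hybar']
    exact hYconv.sum_mem (fun s hs => hw0 s) hwsum
      (fun s hs => hyY s (Finset.mem_Icc.mp hs).1)
  -- concavity averaging
  have hper : ∀ s ∈ Finset.Icc 1 K,
      f x' (y s) - f x' (ybar K) ≤ ⟪gy x' (ybar K), y s - ybar K⟫ := by
    intro s hs
    have h := hconc x' hx' (y s) (hyY s (Finset.mem_Icc.mp hs).1) (ybar K) hybarY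
    have h2 : 0 ≤ μ/2 * ‖y s - ybar K‖^2 := by positivity
    linarith
  have hz0 : ∑ s ∈ Finset.Icc 1 K, w s • (y s - ybar K) = 0 := by
    simp only [smul_sub]
    rw [Finset.sum_sub_distrib, ← hybar', ← Finset.sum_smul, hwsum, one_smul, sub_self]
  have hinner0 : ∑ s ∈ Finset.Icc 1 K, w s * ⟪gy x' (ybar K), y s - ybar K⟫ = 0 := by
    calc ∑ s ∈ Finset.Icc 1 K, w s * ⟪gy x' (ybar K), y s - ybar K⟫
        = ∑ s ∈ Finset.Icc 1 K, ⟪gy x' (ybar K), w s • (y s - ybar K)⟫ := by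
          apply Finset.sum_congr rfl
          intro s hs
          rw [real_inner_smul_right]
      _ = ⟪gy x' (ybar K), ∑ s ∈ Finset.Icc 1 K, w s • (y s - ybar K)⟫ := by
          rw [inner_sum]
      _ = 0 := by rw [hz0, inner_zero_right]
  have havg : ∑ s ∈ Finset.Icc 1 K, w s * f x' (y s) ≤ f x' (ybar K) := by
    have h1 : ∑ s ∈ Finset.Icc 1 K, w s * (f x' (y s) - f x' (ybar K))
        ≤ ∑ s ∈ Finset.Icc 1 K, w s * ⟪gy x' (ybar K), y s - ybar K⟫ :=
      Finset.sum_le_sum (fun s hs => mul_le_mul_of_nonneg_left (hper s hs) (hw0 s))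
    rw [hinner0] at h1
    have h2 : ∑ s ∈ Finset.Icc 1 K, w s * (f x' (y s) - f x' (ybar K))
        = (∑ s ∈ Finset.Icc 1 K, w s * f x' (y s)) - f x' (ybar K) := by
      rw [show (fun s : ℕ => w s * (f x' (y s) - f x' (ybar K)))
        = (fun s : ℕ => w s * f x' (y s) - w s * f x' (ybar K)) from by
          funext s; ring]
      rw [Finset.sum_sub_distrib, ← Finset.sum_mul, hwsum, one_mul]
    linarith [h1, h2.symm.le, h2.le]
  -- comparing the linearization sum with f x' (y s)
  have hlin : ∀ s ∈ Finset.Icc 1 K,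
      ((s:ℝ)*((s:ℝ)+1)) * (f (z s) (y s) + ⟪gx (z s) (y s), x' - z s⟫)
      ≤ ((s:ℝ)*((s:ℝ)+1)) * f x' (y s) := by
    intro s hs
    have hs1 := (Finset.mem_Icc.mp hs).1
    have hc := hconv (y s) (hyY s hs1) x' hx' (z s) (hzXall s hs1)
    apply mul_le_mul_of_nonneg_left _ (by positivity)
    linarith
  have hS : ∑ s ∈ Finset.Icc 1 K, ((s:ℝ)*((s:ℝ)+1)) *
        (f (z s) (y s) + ⟪gx (z s) (y s), x' - z s⟫)
      ≤ ∑ s ∈ Finset.Icc 1 K, ((s:ℝ)*((s:ℝ)+1)) * f x' (y s) :=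
    Finset.sum_le_sum hlin
  have hSw : 3 * ∑ s ∈ Finset.Icc 1 K, ((s:ℝ)*((s:ℝ)+1)) * f x' (y s)
      = ((K:ℝ)*((K:ℝ)+1)*((K:ℝ)+2)) * ∑ s ∈ Finset.Icc 1 K, w s * f x' (y s) := by
    rw [Finset.mul_sum, Finset.mul_sum]
    apply Finset.sum_congr rfl
    intro s hs
    rw [hwdef]
    field_simp
  have hQK := hQ K hK
  have havg' : ((K:ℝ)*((K:ℝ)+1)*((K:ℝ)+2)) * ∑ s ∈ Finset.Icc 1 K, w s * f x' (y s)
      ≤ ((K:ℝ)*((K:ℝ)+1)*((K:ℝ)+2)) * f x' (ybar K) :=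
    mul_le_mul_of_nonneg_left havg hθK0.le
  have hAK0 : 0 ≤ 9*κ*L*(K:ℝ) * ‖x' - v K‖^2 := by positivity
  have hmaxK : f (x K) y' ≤ f (x K) (y K) + ε K := by
    have := hmax K hK y' hy'
    linarith
  have hmaxK' := mul_le_mul_of_nonneg_left hmaxK hθK0.le
  have hεK : ((K:ℝ)*((K:ℝ)+1)*((K:ℝ)+2)) * ε K = κ*L*DX^2 := by
    rw [hε]
    field_simp
  have hfin : ((K:ℝ)*((K:ℝ)+1)*((K:ℝ)+2)) * (f (x K) y' - f x' (ybar K))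
      ≤ (1281/128)*(K:ℝ)*(κ*L*DX^2) := by
    nlinarith [hQK, hS, hSw, havg', hAK0, hmaxK', hεK]
  have hKpos : (0:ℝ) < (K:ℝ) := by linarith
  have hcancel : (((K:ℝ)+1)*((K:ℝ)+2)) * (f (x K) y' - f x' (ybar K)) ≤ 11*κ*L*DX^2 := by
    have hprod : 0 ≤ (K:ℝ) * (κ*L*DX^2) := mul_nonneg hKpos.le hP
    have h2 : (K:ℝ) * ((((K:ℝ)+1)*((K:ℝ)+2)) * (f (x K) y' - f x' (ybar K)))
        ≤ (K:ℝ) * (11*κ*L*DX^2) := by nlinarith [hfin]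
    exact le_of_mul_le_mul_left h2 hKpos
  have hKK : (0:ℝ) < ((K:ℝ)+1)*((K:ℝ)+2) := by positivity
  rw [le_div_iff₀ hKK]
  linarith [hcancel]
end

section
/- The map y* : X → Y defined by y*(x) = argmax_{y∈Y} f(x, y) (the maximizer is unique by strong concavity) is κ-Lipschitz continuous: ‖y*(x_1) − y*(x_2)‖ ≤ κ·‖x_1 − x_2‖ for all x_1, x_2 ∈ X, where κ = L/μ. -/
open scoped RealInnerProductSpace

set_option maxHeartbeats 1000000 in
/-- Under Assumption 1 (L-smooth, convex in x, μ-strongly-concave in y,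
convex compact feasible sets), the best-response map `y*(x) = argmax_{y∈Y} f(x,y)` is
`κ`-Lipschitz on `X`, where `κ = L/μ`. -/
theorem best_response_lipschitz
    {n m : ℕ}
    (X : Set (EuclideanSpace ℝ (Fin n))) (Y : Set (EuclideanSpace ℝ (Fin m)))
    (hXconv : Convex ℝ X) (hXcomp : IsCompact X) (hXne : X.Nonempty)
    (hYconv : Convex ℝ Y) (hYcomp : IsCompact Y) (hYne : Y.Nonempty)
    (DX DY : ℝ)
    (hDX : ∀ x₁ ∈ X, ∀ x₂ ∈ X, ‖x₁ - x₂‖ ≤ DX)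
    (hDY : ∀ y₁ ∈ Y, ∀ y₂ ∈ Y, ‖y₁ - y₂‖ ≤ DY)
    (f : EuclideanSpace ℝ (Fin n) → EuclideanSpace ℝ (Fin m) → ℝ)
    (gx : EuclideanSpace ℝ (Fin n) → EuclideanSpace ℝ (Fin m) → EuclideanSpace ℝ (Fin n))
    (gy : EuclideanSpace ℝ (Fin n) → EuclideanSpace ℝ (Fin m) → EuclideanSpace ℝ (Fin m))
    (hgx : ∀ x y, HasGradientAt (fun x' => f x' y) (gx x y) x)
    (hgy : ∀ x y, HasGradientAt (fun y' => f x y') (gy x y) y)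
    (L μ κ : ℝ) (hμ : 0 < μ) (hμL : μ ≤ L) (hκ : κ = L / μ)
    (hsmooth : ∀ x₁ ∈ X, ∀ x₂ ∈ X, ∀ y₁ ∈ Y, ∀ y₂ ∈ Y,
      ‖gx x₁ y₁ - gx x₂ y₂‖ ^ 2 + ‖gy x₁ y₁ - gy x₂ y₂‖ ^ 2 ≤
        L ^ 2 * (‖x₁ - x₂‖ ^ 2 + ‖y₁ - y₂‖ ^ 2))
    (hconv : ∀ y ∈ Y, ∀ x₁ ∈ X, ∀ x₂ ∈ X,
      f x₁ y - f x₂ y ≥ ⟪gx x₂ y, x₁ - x₂⟫)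
    (hconc : ∀ x ∈ X, ∀ y₁ ∈ Y, ∀ y₂ ∈ Y,
      f x y₁ - f x y₂ ≤ ⟪gy x y₂, y₁ - y₂⟫ - μ / 2 * ‖y₁ - y₂‖ ^ 2)
    (ystar : EuclideanSpace ℝ (Fin n) → EuclideanSpace ℝ (Fin m))
    (hystarY : ∀ x ∈ X, ystar x ∈ Y)
    (hystar : ∀ x ∈ X, ∀ y ∈ Y, f x y ≤ f x (ystar x)) :
    ∀ x₁ ∈ X, ∀ x₂ ∈ X, ‖ystar x₁ - ystar x₂‖ ≤ κ * ‖x₁ - x₂‖ := by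

  intro x₁ hx₁ x₂ hx₂
  have hL : 0 < L := lt_of_lt_of_le hμ hμL
  have hy₁ : ystar x₁ ∈ Y := hystarY x₁ hx₁
  have hy₂ : ystar x₂ ∈ Y := hystarY x₂ hx₂
  -- Variational inequality at the maximizer
  have VI : ∀ x ∈ X, ∀ y ∈ Y, ⟪gy x (ystar x), y - ystar x⟫ ≤ 0 := by
    intro x hx y hy
    set w := ystar x with hw
    have hwY : w ∈ Y := hystarY x hx
    by_cases hv0 : y - w = 0
    · simp [hv0]
    have hvn : 0 < ‖y - w‖ := norm_pos_iff.mpr hv0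
    have key : ∀ t : ℝ, 0 < t → t ≤ 1 → ⟪gy x w, y - w⟫ ≤ L * t * ‖y - w‖ ^ 2 := by
      intro t ht ht1
      set yt := w + t • (y - w) with hyt
      have hytY : yt ∈ Y := by
        have h := hYconv hwY hy (by linarith : (0:ℝ) ≤ 1 - t) ht.le (by ring)
        have : yt = (1 - t) • w + t • y := by rw [hyt]; module
        rw [this]; exact h
      have hwyt : w - yt = -(t • (y - w)) := by rw [hyt]; module
      have hnorm : ‖w - yt‖ = t * ‖y - w‖ := by
        rw [hwyt, norm_neg, norm_smul, Real.norm_eq_abs, abs_of_pos ht]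
      have hc := hconc x hx w hwY yt hytY
      have hopt := hystar x hx yt hytY
      have hinner : ⟪gy x yt, w - yt⟫ = -(t * ⟪gy x yt, y - w⟫) := by
        rw [hwyt, inner_neg_right, real_inner_smul_right]
      have h1 : ⟪gy x yt, y - w⟫ ≤ -(μ / 2 * t * ‖y - w‖ ^ 2) := by
        rw [hinner, hnorm] at hc
        nlinarith [hc, hopt]
      have hs := hsmooth x hx x hx w hwY yt hytY
      have hxx : x - x = (0 : EuclideanSpace ℝ (Fin n)) := sub_self x
      rw [hxx, norm_zero, hnorm] at hs
      have hgy2 : ‖gy x w - gy x yt‖ ^ 2 ≤ (L * (t * ‖y - w‖)) ^ 2 := by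
        nlinarith [sq_nonneg ‖gx x w - gx x yt‖]
      have hgyle : ‖gy x w - gy x yt‖ ≤ L * (t * ‖y - w‖) := by
        nlinarith [norm_nonneg (gy x w - gy x yt), mul_nonneg hL.le
          (mul_nonneg ht.le hvn.le)]
      have hcs : ⟪gy x w - gy x yt, y - w⟫ ≤ ‖gy x w - gy x yt‖ * ‖y - w‖ :=
        real_inner_le_norm _ _
      have hsplit : ⟪gy x w, y - w⟫ =
          ⟪gy x w - gy x yt, y - w⟫ + ⟪gy x yt, y - w⟫ := by
        rw [inner_sub_left]; ring
      have hmm := mul_le_mul_of_nonneg_right hgyle hvn.le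
      have hpos : 0 ≤ μ / 2 * t * ‖y - w‖ ^ 2 := by positivity
      have heq : L * (t * ‖y - w‖) * ‖y - w‖ = L * t * ‖y - w‖ ^ 2 := by ring
      linarith [h1, hcs, hsplit.le, hsplit.ge]
    -- pass to the limit t → 0
    apply le_of_forall_pos_le_add
    intro ε hε
    have hden : 0 < L * ‖y - w‖ ^ 2 := by positivity
    set t := min 1 (ε / (L * ‖y - w‖ ^ 2)) with htdef
    have ht0 : 0 < t := lt_min one_pos (div_pos hε hden)
    have ht1 : t ≤ 1 := min_le_left _ _
    have ht2 : t ≤ ε / (L * ‖y - w‖ ^ 2) := min_le_right _ _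
    have hkey := key t ht0 ht1
    have : L * t * ‖y - w‖ ^ 2 ≤ ε := by
      rw [div_eq_mul_inv] at ht2
      have := mul_le_mul_of_nonneg_right ht2 hden.le
      calc L * t * ‖y - w‖ ^ 2 = t * (L * ‖y - w‖ ^ 2) := by ring
        _ ≤ ε * (L * ‖y - w‖ ^ 2)⁻¹ * (L * ‖y - w‖ ^ 2) := this
        _ = ε := by field_simp
    linarith
  -- main argument
  set d := ‖ystar x₁ - ystar x₂‖ with hd
  have hd0 : 0 ≤ d := norm_nonneg _
  have h1 := hconc x₁ hx₁ (ystar x₁) hy₁ (ystar x₂) hy₂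
  have h2 := hconc x₁ hx₁ (ystar x₂) hy₂ (ystar x₁) hy₁
  have hnsymm : ‖ystar x₂ - ystar x₁‖ = d := by rw [hd, norm_sub_rev]
  have hinn1 : ⟪gy x₁ (ystar x₁), ystar x₂ - ystar x₁⟫ =
      -⟪gy x₁ (ystar x₁), ystar x₁ - ystar x₂⟫ := by
    rw [← inner_neg_right]; congr 1; module
  have VI1 := VI x₁ hx₁ (ystar x₂) hy₂
  have VI2 := VI x₂ hx₂ (ystar x₁) hy₁
  have hmono : μ * d ^ 2 ≤ ⟪gy x₁ (ystar x₂), ystar x₁ - ystar x₂⟫ -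
      ⟪gy x₁ (ystar x₁), ystar x₁ - ystar x₂⟫ := by
    rw [hnsymm, hinn1] at h2
    nlinarith [h1, h2]
  have hVI1' : (0:ℝ) ≤ ⟪gy x₁ (ystar x₁), ystar x₁ - ystar x₂⟫ := by
    rw [hinn1] at VI1; linarith
  have hstep : μ * d ^ 2 ≤ ⟪gy x₁ (ystar x₂) - gy x₂ (ystar x₂), ystar x₁ - ystar x₂⟫ := by
    rw [inner_sub_left]
    linarith [hmono, hVI1', VI2]
  have hcs : ⟪gy x₁ (ystar x₂) - gy x₂ (ystar x₂), ystar x₁ - ystar x₂⟫ ≤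
      ‖gy x₁ (ystar x₂) - gy x₂ (ystar x₂)‖ * d := real_inner_le_norm _ _
  have hs := hsmooth x₁ hx₁ x₂ hx₂ (ystar x₂) hy₂ (ystar x₂) hy₂
  rw [sub_self, norm_zero] at hs
  have hgle : ‖gy x₁ (ystar x₂) - gy x₂ (ystar x₂)‖ ≤ L * ‖x₁ - x₂‖ := by
    nlinarith [sq_nonneg ‖gx x₁ (ystar x₂) - gx x₂ (ystar x₂)‖,
      norm_nonneg (gy x₁ (ystar x₂) - gy x₂ (ystar x₂)),
      mul_nonneg hL.le (norm_nonneg (x₁ - x₂))]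
  have hfinal : μ * d ^ 2 ≤ L * ‖x₁ - x₂‖ * d := by
    calc μ * d ^ 2 ≤ ‖gy x₁ (ystar x₂) - gy x₂ (ystar x₂)‖ * d := le_trans hstep hcs
      _ ≤ L * ‖x₁ - x₂‖ * d := mul_le_mul_of_nonneg_right hgle hd0
  rw [hκ]
  rcases eq_or_lt_of_le hd0 with h | h
  · rw [← h]; positivity
  · rw [div_mul_eq_mul_div, le_div_iff₀ hμ]
    nlinarith [hfinal]
end

section
/- Fix k ≥ 1, points x_{k−1}, v_{k−1}, z_k ∈ X, and set γ_k = 3/(k+2) and α_k = 6κL/(k+1). Define ψ_k : X → ℝ^n by ψ_k(x) = (1−γ_k)x_{k−1} + γ_k · argmin_{v∈X} { ⟨∇_x f(z_k, y*(x)), v⟩ + (α_k/2)‖v − v_{k−1}‖² } (the minimizer is unique by strong convexity of the subproblem). Then ψ_k is a (1/2)-contraction: ‖ψ_k(x_1) − ψ_k(x_2)‖ ≤ (1/2)‖x_1 − x_2‖ for all x_1, x_2 ∈ X. -/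
open scoped RealInnerProductSpace

private lemma aux_le_zero (a C : ℝ) (hC : 0 ≤ C)
    (h : ∀ t : ℝ, 0 < t → t ≤ 1 → a ≤ t * C) : a ≤ 0 := by
  by_contra hlt
  push_neg at hlt
  rcases eq_or_lt_of_le hC with hC0 | hC0
  · have := h 1 one_pos le_rfl; nlinarith
  · have ht : (0:ℝ) < min 1 (a / (2*C)) := lt_min one_pos (by positivity)
    have h1 := h _ ht (min_le_left _ _)
    have h2 : min 1 (a/(2*C)) * C ≤ (a/(2*C)) * C :=
      mul_le_mul_of_nonneg_right (min_le_right _ _) hC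
    have h3 : (a/(2*C)) * C = a/2 := by field_simp
    linarith

private lemma sq_le_imp {a b : ℝ} (ha : 0 ≤ a) (hb : 0 ≤ b) (h : a^2 ≤ b^2) : a ≤ b := by
  nlinarith

set_option maxHeartbeats 1000000 in
/-- With `γ_k = 3/(k+2)`, `α_k = 6κL/(k+1)` and
`ψ_k(x) = (1−γ_k)·x_{k−1} + γ_k · argmin_{v∈X}{⟪∇ₓf(z_k, y*(x)), v⟫ + (α_k/2)‖v − v_{k−1}‖²}`,
the map `ψ_k` is a `(1/2)`-contraction on `X`. -/
theorem prox_map_is_contraction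
    {n m : ℕ}
    (X : Set (EuclideanSpace ℝ (Fin n))) (Y : Set (EuclideanSpace ℝ (Fin m)))
    (hXconv : Convex ℝ X) (hXcomp : IsCompact X) (hXne : X.Nonempty)
    (hYconv : Convex ℝ Y) (hYcomp : IsCompact Y) (hYne : Y.Nonempty)
    (f : EuclideanSpace ℝ (Fin n) → EuclideanSpace ℝ (Fin m) → ℝ)
    (gx : EuclideanSpace ℝ (Fin n) → EuclideanSpace ℝ (Fin m) → EuclideanSpace ℝ (Fin n))
    (gy : EuclideanSpace ℝ (Fin n) → EuclideanSpace ℝ (Fin m) → EuclideanSpace ℝ (Fin m))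
    (hgx : ∀ x y, HasGradientAt (fun x' => f x' y) (gx x y) x)
    (hgy : ∀ x y, HasGradientAt (fun y' => f x y') (gy x y) y)
    (L μ κ : ℝ) (hμ : 0 < μ) (hμL : μ ≤ L) (hκ : κ = L / μ)
    (hsmooth : ∀ x₁ ∈ X, ∀ x₂ ∈ X, ∀ y₁ ∈ Y, ∀ y₂ ∈ Y,
      ‖gx x₁ y₁ - gx x₂ y₂‖ ^ 2 + ‖gy x₁ y₁ - gy x₂ y₂‖ ^ 2 ≤
        L ^ 2 * (‖x₁ - x₂‖ ^ 2 + ‖y₁ - y₂‖ ^ 2))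
    (hconv : ∀ y ∈ Y, ∀ x₁ ∈ X, ∀ x₂ ∈ X,
      f x₁ y - f x₂ y ≥ ⟪gx x₂ y, x₁ - x₂⟫)
    (hconc : ∀ x ∈ X, ∀ y₁ ∈ Y, ∀ y₂ ∈ Y,
      f x y₁ - f x y₂ ≤ ⟪gy x y₂, y₁ - y₂⟫ - μ / 2 * ‖y₁ - y₂‖ ^ 2)
    -- the best-response map y*
    (ystar : EuclideanSpace ℝ (Fin n) → EuclideanSpace ℝ (Fin m))
    (hystarY : ∀ x ∈ X, ystar x ∈ Y)
    (hystar : ∀ x ∈ X, ∀ y ∈ Y, f x y ≤ f x (ystar x))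
    -- iteration data
    (k : ℕ) (hk : 1 ≤ k)
    (xprev vprev zk : EuclideanSpace ℝ (Fin n))
    (hxprev : xprev ∈ X) (hvprev : vprev ∈ X) (hzk : zk ∈ X)
    (γ α : ℝ) (hγ : γ = 3 / ((k : ℝ) + 2)) (hα : α = 6 * κ * L / ((k : ℝ) + 1))
    -- the argmin map of the subproblem and the resulting map ψ
    (vmin : EuclideanSpace ℝ (Fin n) → EuclideanSpace ℝ (Fin n))
    (hvminX : ∀ x ∈ X, vmin x ∈ X)
    (hvmin : ∀ x ∈ X, ∀ v ∈ X,
      ⟪gx zk (ystar x), vmin x⟫ + α / 2 * ‖vmin x - vprev‖ ^ 2 ≤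
        ⟪gx zk (ystar x), v⟫ + α / 2 * ‖v - vprev‖ ^ 2)
    (ψ : EuclideanSpace ℝ (Fin n) → EuclideanSpace ℝ (Fin n))
    (hψ : ∀ x, ψ x = (1 - γ) • xprev + γ • vmin x) :
    ∀ x₁ ∈ X, ∀ x₂ ∈ X, ‖ψ x₁ - ψ x₂‖ ≤ 1 / 2 * ‖x₁ - x₂‖ := by
  have hL : 0 < L := lt_of_lt_of_le hμ hμL
  have hκpos : 0 < κ := hκ ▸ div_pos hL hμ
  have hk1 : (0:ℝ) < (k:ℝ) + 1 := by positivity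
  have hk2 : (0:ℝ) < (k:ℝ) + 2 := by positivity
  have hγpos : 0 < γ := by rw [hγ]; positivity
  have hαpos : 0 < α := by rw [hα]; positivity
  -- First-order optimality of vmin
  have hvfo : ∀ x ∈ X, ∀ w ∈ X,
      0 ≤ ⟪gx zk (ystar x), w - vmin x⟫ + α * ⟪vmin x - vprev, w - vmin x⟫ := by
    intro x hx w hw
    set g := gx zk (ystar x) with hg
    set u := vmin x with hu
    have key := aux_le_zero (-(⟪g, w - u⟫ + α * ⟪u - vprev, w - u⟫)) (α/2 * ‖w-u‖^2)
      (by positivity) ?_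
    · linarith
    intro t ht ht1
    have hvX : u + t • (w - u) ∈ X := by
      have := hXconv (hvminX x hx) hw (by linarith : (0:ℝ) ≤ 1 - t) ht.le (by ring)
      convert this using 1
      module
    have hineq := hvmin x hx _ hvX
    rw [← hg, ← hu] at hineq
    have hexp : ‖u + t•(w-u) - vprev‖^2
        = ‖u - vprev‖^2 + 2*(t*⟪u - vprev, w-u⟫) + t^2*‖w-u‖^2 := by
      have e : u + t•(w-u) - vprev = (u - vprev) + t•(w-u) := by abel
      rw [e, norm_add_sq_real, real_inner_smul_right, norm_smul]
      simp [mul_pow, Real.norm_eq_abs, sq_abs]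
    have hip : ⟪g, u + t•(w-u)⟫ = ⟪g,u⟫ + t*⟪g, w-u⟫ := by
      rw [inner_add_right, real_inner_smul_right]
    rw [hip, hexp] at hineq
    have key2 : 0 ≤ t * (⟪g,w-u⟫ + α*⟪u-vprev,w-u⟫ + t*(α/2*‖w-u‖^2)) := by nlinarith
    have key3 : (0:ℝ) ≤ ⟪g,w-u⟫ + α*⟪u-vprev,w-u⟫ + t*(α/2*‖w-u‖^2) :=
      nonneg_of_mul_nonneg_right key2 ht
    linarith
  -- First-order optimality of ystar
  have hyfo : ∀ x ∈ X, ∀ y ∈ Y, ⟪gy x (ystar x), y - ystar x⟫ ≤ 0 := by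
    intro x hx y hy
    set ys := ystar x with hys
    have hysY := hystarY x hx
    apply aux_le_zero _ (L * ‖y - ys‖^2) (by positivity)
    intro t ht ht1
    set yt := ys + t•(y - ys) with hyt
    have hytY : yt ∈ Y := by
      have := hYconv hysY hy (by linarith : (0:ℝ) ≤ 1 - t) ht.le (by ring)
      convert this using 1
      module
    have h1 := hconc x hx ys hysY _ hytY
    have h2 := hystar x hx _ hytY
    have e1 : ys - yt = (-t)•(y-ys) := by rw [hyt]; module
    have hn : ‖ys - yt‖^2 = t^2*‖y-ys‖^2 := by
      rw [e1, norm_smul]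
      simp [mul_pow, Real.norm_eq_abs, sq_abs]
    rw [hn, e1, real_inner_smul_right] at h1
    have hA : t * ⟪gy x yt, y - ys⟫ ≤ t * 0 := by nlinarith
    have hA' : ⟪gy x yt, y - ys⟫ ≤ 0 := le_of_mul_le_mul_left hA ht
    have hgyL : ‖gy x ys - gy x yt‖ ≤ L * ‖ys - yt‖ := by
      have hs := hsmooth x hx x hx ys hysY yt hytY
      simp only [sub_self, norm_zero] at hs
      apply sq_le_imp (norm_nonneg _) (by positivity)
      calc ‖gy x ys - gy x yt‖^2 ≤ L^2 * (0^2 + ‖ys - yt‖^2) := by nlinarith [sq_nonneg ‖gx x ys - gx x yt‖]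
        _ = (L * ‖ys - yt‖)^2 := by ring
    have hsplit : ⟪gy x ys, y - ys⟫
        = ⟪gy x ys - gy x yt, y - ys⟫ + ⟪gy x yt, y - ys⟫ := by
      rw [inner_sub_left]; ring
    rw [hsplit]
    have hcs : ⟪gy x ys - gy x yt, y - ys⟫ ≤ ‖gy x ys - gy x yt‖ * ‖y - ys‖ :=
      real_inner_le_norm _ _
    have hnyt : ‖ys - yt‖ = t * ‖y - ys‖ := by
      rw [e1, norm_smul, Real.norm_eq_abs, abs_neg, abs_of_pos ht]
    have h6 : ‖gy x ys - gy x yt‖ * ‖y - ys‖ ≤ L * (t * ‖y - ys‖) * ‖y - ys‖ := by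
      rw [← hnyt]; exact mul_le_mul_of_nonneg_right hgyL (norm_nonneg _)
    nlinarith [hcs, h6, hA']
  -- ystar is κ-Lipschitz
  have hyLip : ∀ x₁ ∈ X, ∀ x₂ ∈ X, ‖ystar x₁ - ystar x₂‖ ≤ κ * ‖x₁ - x₂‖ := by
    intro x₁ hx₁ x₂ hx₂
    set y₁ := ystar x₁ with hy₁
    set y₂ := ystar x₂ with hy₂
    have hy₁Y := hystarY x₁ hx₁
    have hy₂Y := hystarY x₂ hx₂
    have hc1 := hconc x₁ hx₁ y₁ hy₁Y y₂ hy₂Y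
    have hc2 := hconc x₁ hx₁ y₂ hy₂Y y₁ hy₁Y
    have hrev : ‖y₂ - y₁‖ = ‖y₁ - y₂‖ := norm_sub_rev _ _
    rw [hrev] at hc2
    have hmono : μ * ‖y₁ - y₂‖^2 ≤ ⟪gy x₁ y₂ - gy x₁ y₁, y₁ - y₂⟫ := by
      have e2 : ⟪gy x₁ y₁, y₂ - y₁⟫ = -⟪gy x₁ y₁, y₁ - y₂⟫ := by
        rw [← inner_neg_right]; congr 1; abel
      rw [e2] at hc2
      rw [inner_sub_left]
      linarith
    have hfo1 : ⟪gy x₁ y₁, y₂ - y₁⟫ ≤ 0 := hyfo x₁ hx₁ y₂ hy₂Y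
    have hfo2 : ⟪gy x₂ y₂, y₁ - y₂⟫ ≤ 0 := hyfo x₂ hx₂ y₁ hy₁Y
    have hgyL : ‖gy x₁ y₂ - gy x₂ y₂‖ ≤ L * ‖x₁ - x₂‖ := by
      have hs := hsmooth x₁ hx₁ x₂ hx₂ y₂ hy₂Y y₂ hy₂Y
      simp only [sub_self, norm_zero] at hs
      apply sq_le_imp (norm_nonneg _) (by positivity)
      calc ‖gy x₁ y₂ - gy x₂ y₂‖^2 ≤ L^2 * ‖x₁ - x₂‖^2 := by
            nlinarith [sq_nonneg ‖gx x₁ y₂ - gx x₂ y₂‖]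
        _ = (L * ‖x₁ - x₂‖)^2 := by ring
    have hsplit : ⟪gy x₁ y₂ - gy x₁ y₁, y₁ - y₂⟫
        = ⟪gy x₁ y₂ - gy x₂ y₂, y₁ - y₂⟫ + ⟪gy x₂ y₂, y₁ - y₂⟫ - ⟪gy x₁ y₁, y₁ - y₂⟫ := by
      simp only [inner_sub_left]; ring
    have e3 : ⟪gy x₁ y₁, y₂ - y₁⟫ = -⟪gy x₁ y₁, y₁ - y₂⟫ := by
      rw [← inner_neg_right]; congr 1; abel
    have hcs : ⟪gy x₁ y₂ - gy x₂ y₂, y₁ - y₂⟫ ≤ ‖gy x₁ y₂ - gy x₂ y₂‖ * ‖y₁ - y₂‖ :=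
      real_inner_le_norm _ _
    have hkey : μ * ‖y₁ - y₂‖^2 ≤ L * ‖x₁ - x₂‖ * ‖y₁ - y₂‖ := by
      rw [hsplit] at hmono
      rw [e3] at hfo1
      nlinarith [norm_nonneg (y₁ - y₂), norm_nonneg (x₁ - x₂)]
    rcases eq_or_lt_of_le (norm_nonneg (y₁ - y₂)) with hz | hz
    · rw [← hz]; positivity
    · rw [hκ, div_mul_eq_mul_div, le_div_iff₀ hμ]
      nlinarith
  -- Main argument
  intro x₁ hx₁ x₂ hx₂
  set u₁ := vmin x₁ with hu₁
  set u₂ := vmin x₂ with hu₂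
  set g₁ := gx zk (ystar x₁) with hg₁
  set g₂ := gx zk (ystar x₂) with hg₂
  have h1 := hvfo x₁ hx₁ u₂ (hvminX x₂ hx₂)
  have h2 := hvfo x₂ hx₂ u₁ (hvminX x₁ hx₁)
  rw [← hg₁, ← hu₁] at h1
  rw [← hg₂, ← hu₂] at h2
  have e4 : ⟪g₂, u₁ - u₂⟫ = -⟪g₂, u₂ - u₁⟫ := by
    rw [← inner_neg_right]; congr 1; abel
  have e5 : ⟪u₁ - vprev, u₂ - u₁⟫ + ⟪u₂ - vprev, u₁ - u₂⟫ = -‖u₁ - u₂‖^2 := by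
    have a1 : u₁ - vprev = (u₂ - vprev) + (u₁ - u₂) := by abel
    have a2 : ⟪u₂ - vprev, u₂ - u₁⟫ + ⟪u₂ - vprev, u₁ - u₂⟫ = 0 := by
      rw [← inner_add_right]
      have e : (u₂ - u₁) + (u₁ - u₂) = 0 := by abel
      rw [e, inner_zero_right]
    have a3 : ⟪u₁ - u₂, u₂ - u₁⟫ = -‖u₁ - u₂‖^2 := by
      have e : u₂ - u₁ = -(u₁ - u₂) := by abel
      rw [e, inner_neg_right, real_inner_self_eq_norm_sq]
    rw [a1, inner_add_left]
    linarith
  have hcontr : α * ‖u₁ - u₂‖^2 ≤ ⟪g₁ - g₂, u₂ - u₁⟫ := by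
    rw [inner_sub_left]
    nlinarith [h1, h2, e4, e5]
  have hcs2 : ⟪g₁ - g₂, u₂ - u₁⟫ ≤ ‖g₁ - g₂‖ * ‖u₁ - u₂‖ := by
    have := real_inner_le_norm (g₁ - g₂) (u₂ - u₁)
    rw [norm_sub_rev u₂ u₁] at this
    exact this
  have hgxL : ‖g₁ - g₂‖ ≤ L * ‖ystar x₁ - ystar x₂‖ := by
    have hs := hsmooth zk hzk zk hzk (ystar x₁) (hystarY x₁ hx₁) (ystar x₂) (hystarY x₂ hx₂)
    simp only [sub_self, norm_zero] at hs
    apply sq_le_imp (norm_nonneg _) (by positivity)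
    calc ‖g₁ - g₂‖^2 ≤ L^2 * ‖ystar x₁ - ystar x₂‖^2 := by
          nlinarith [sq_nonneg ‖gy zk (ystar x₁) - gy zk (ystar x₂)‖]
      _ = (L * ‖ystar x₁ - ystar x₂‖)^2 := by ring
  have huLip : α * ‖u₁ - u₂‖ ≤ L * κ * ‖x₁ - x₂‖ := by
    rcases eq_or_lt_of_le (norm_nonneg (u₁ - u₂)) with hz | hz
    · rw [← hz]
      have : (0:ℝ) ≤ L * κ * ‖x₁ - x₂‖ := by positivity
      simpa using this
    · have hstep : α * ‖u₁ - u₂‖ ≤ ‖g₁ - g₂‖ := by nlinarith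
      calc α * ‖u₁ - u₂‖ ≤ ‖g₁ - g₂‖ := hstep
        _ ≤ L * ‖ystar x₁ - ystar x₂‖ := hgxL
        _ ≤ L * (κ * ‖x₁ - x₂‖) := by
            exact mul_le_mul_of_nonneg_left (hyLip x₁ hx₁ x₂ hx₂) hL.le
        _ = L * κ * ‖x₁ - x₂‖ := by ring
  have hpsidiff : ψ x₁ - ψ x₂ = γ • (u₁ - u₂) := by
    rw [hψ, hψ]; module
  rw [hpsidiff, norm_smul, Real.norm_eq_abs, abs_of_pos hγpos]
  have hconst : γ * (L * κ) / α ≤ 1 / 2 := by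
    have heq : γ * (L * κ) / α = ((k:ℝ)+1)/(2*((k:ℝ)+2)) := by
      rw [hγ, hα]
      field_simp
      ring
    rw [heq, div_le_iff₀ (by positivity)]
    linarith
  calc γ * ‖u₁ - u₂‖ = γ / α * (α * ‖u₁ - u₂‖) := by field_simp
    _ ≤ γ / α * (L * κ * ‖x₁ - x₂‖) :=
        mul_le_mul_of_nonneg_left huLip (by positivity)
    _ = γ * (L * κ) / α * ‖x₁ - x₂‖ := by ring
    _ ≤ 1 / 2 * ‖x₁ - x₂‖ := mul_le_mul_of_nonneg_right hconst (norm_nonneg _)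
end

section
/- Fix z ∈ X, v ∈ ℝ^n, x' ∈ X, α > 0, ζ ≥ 0, ε_cgs ≥ 0. Let v* = argmin_{u∈X} { ⟨∇_x f(z, y*(x')), u⟩ + (α/2)‖u − v‖² }. Suppose y' ∈ Y satisfies f(x', y') ≥ max_{y∈Y} f(x', y) − ε_cgs, and suppose v' ∈ X satisfies the approximate optimality (Wolfe-gap) condition ⟨∇_x f(z, y') + α(v' − v), v' − u⟩ ≤ ζ for all u ∈ X. Then ‖v* − v'‖ ≤ √( 2κL·ε_cgs/α² + 2ζ/α ), where κ = L/μ. -/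
open scoped RealInnerProductSpace

private lemma aux_limit_nonneg {a c : ℝ} (hc : 0 ≤ c)
    (h : ∀ t : ℝ, 0 < t → t ≤ 1 → 0 ≤ a + c * t) : 0 ≤ a := by
  by_contra h'
  push_neg at h'
  have hpos : (0:ℝ) < 2 * (c + 1) := by linarith
  have ht : (0:ℝ) < min 1 (-a / (2 * (c + 1))) :=
    lt_min one_pos (div_pos (by linarith) hpos)
  set t := min 1 (-a / (2 * (c + 1))) with htdef
  have h1 := h t ht (min_le_left _ _)
  have h2 : t ≤ -a / (2 * (c + 1)) := min_le_right _ _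
  have h3 : t * (2 * (c + 1)) ≤ -a := (le_div_iff₀ hpos).mp h2
  have h4 : 0 ≤ c * t := mul_nonneg hc ht.le
  nlinarith [h1, h3, h4, ht]

set_option maxHeartbeats 1000000 in
/-- If `y'` is an `ε_cgs`-approximate maximizer of `f(x',·)` over `Y` and
`v'` satisfies the Wolfe-gap condition `⟪∇ₓf(z,y') + α(v'−v), v'−u⟫ ≤ ζ` for all `u ∈ X`,
then `v'` is close to the exact proximal point
`v* = argmin_{u∈X}{⟪∇ₓf(z, y*(x')), u⟫ + (α/2)‖u−v‖²}`:
`‖v* − v'‖ ≤ √(2κL·ε_cgs/α² + 2ζ/α)`. -/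
theorem inexact_prox_point_close
    {n m : ℕ}
    (X : Set (EuclideanSpace ℝ (Fin n))) (Y : Set (EuclideanSpace ℝ (Fin m)))
    (hXconv : Convex ℝ X) (hXcomp : IsCompact X) (hXne : X.Nonempty)
    (hYconv : Convex ℝ Y) (hYcomp : IsCompact Y) (hYne : Y.Nonempty)
    (f : EuclideanSpace ℝ (Fin n) → EuclideanSpace ℝ (Fin m) → ℝ)
    (gx : EuclideanSpace ℝ (Fin n) → EuclideanSpace ℝ (Fin m) → EuclideanSpace ℝ (Fin n))
    (gy : EuclideanSpace ℝ (Fin n) → EuclideanSpace ℝ (Fin m) → EuclideanSpace ℝ (Fin m))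
    (hgx : ∀ x y, HasGradientAt (fun x' => f x' y) (gx x y) x)
    (hgy : ∀ x y, HasGradientAt (fun y' => f x y') (gy x y) y)
    (L μ κ : ℝ) (hμ : 0 < μ) (hμL : μ ≤ L) (hκ : κ = L / μ)
    (hsmooth : ∀ x₁ ∈ X, ∀ x₂ ∈ X, ∀ y₁ ∈ Y, ∀ y₂ ∈ Y,
      ‖gx x₁ y₁ - gx x₂ y₂‖ ^ 2 + ‖gy x₁ y₁ - gy x₂ y₂‖ ^ 2 ≤
        L ^ 2 * (‖x₁ - x₂‖ ^ 2 + ‖y₁ - y₂‖ ^ 2))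
    (hconv : ∀ y ∈ Y, ∀ x₁ ∈ X, ∀ x₂ ∈ X,
      f x₁ y - f x₂ y ≥ ⟪gx x₂ y, x₁ - x₂⟫)
    (hconc : ∀ x ∈ X, ∀ y₁ ∈ Y, ∀ y₂ ∈ Y,
      f x y₁ - f x y₂ ≤ ⟪gy x y₂, y₁ - y₂⟫ - μ / 2 * ‖y₁ - y₂‖ ^ 2)
    -- the best-response map y*
    (ystar : EuclideanSpace ℝ (Fin n) → EuclideanSpace ℝ (Fin m))
    (hystarY : ∀ x ∈ X, ystar x ∈ Y)
    (hystar : ∀ x ∈ X, ∀ y ∈ Y, f x y ≤ f x (ystar x))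
    -- data
    (z : EuclideanSpace ℝ (Fin n)) (hz : z ∈ X)
    (v : EuclideanSpace ℝ (Fin n))
    (x' : EuclideanSpace ℝ (Fin n)) (hx' : x' ∈ X)
    (α ζ εcgs : ℝ) (hα : 0 < α) (hζ : 0 ≤ ζ) (hεcgs : 0 ≤ εcgs)
    (vstar : EuclideanSpace ℝ (Fin n)) (hvstarX : vstar ∈ X)
    (hvstar : ∀ u ∈ X,
      ⟪gx z (ystar x'), vstar⟫ + α / 2 * ‖vstar - v‖ ^ 2 ≤
        ⟪gx z (ystar x'), u⟫ + α / 2 * ‖u - v‖ ^ 2)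
    (y' : EuclideanSpace ℝ (Fin m)) (hy'Y : y' ∈ Y)
    (hy' : ∀ y ∈ Y, f x' y' ≥ f x' y - εcgs)
    (v' : EuclideanSpace ℝ (Fin n)) (hv'X : v' ∈ X)
    (hv' : ∀ u ∈ X, ⟪gx z y' + α • (v' - v), v' - u⟫ ≤ ζ) :
    ‖vstar - v'‖ ≤ Real.sqrt (2 * κ * L * εcgs / α ^ 2 + 2 * ζ / α) := by

  subst hκ
  have hysY : ystar x' ∈ Y := hystarY x' hx'
  -- quadratic growth of the strongly concave inner problem
  have hgrow : 0 ≤ f x' (ystar x') - f x' y' - μ / 2 * ‖y' - ystar x'‖ ^ 2 := by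
    apply aux_limit_nonneg (c := μ / 2 * ‖y' - ystar x'‖ ^ 2) (by positivity)
    intro t ht ht1
    have hw : (1 - t) • ystar x' + t • y' ∈ Y :=
      hYconv hysY hy'Y (by linarith) ht.le (by ring)
    set w := (1 - t) • ystar x' + t • y' with hwdef
    have e1 : y' - w = (1 - t) • (y' - ystar x') := by rw [hwdef]; module
    have e2 : ystar x' - w = (-t) • (y' - ystar x') := by rw [hwdef]; module
    have h1 : f x' w ≤ f x' (ystar x') := hystar x' hx' w hw
    have h2 := hconc x' hx' y' hy'Y w hw
    have h3 := hconc x' hx' (ystar x') hysY w hw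
    rw [e1, real_inner_smul_right] at h2
    rw [e2, real_inner_smul_right] at h3
    have n1 : ‖(1 - t) • (y' - ystar x')‖ ^ 2 = (1 - t) ^ 2 * ‖y' - ystar x'‖ ^ 2 := by
      rw [norm_smul, Real.norm_eq_abs, mul_pow, sq_abs]
    have n2 : ‖(-t) • (y' - ystar x')‖ ^ 2 = t ^ 2 * ‖y' - ystar x'‖ ^ 2 := by
      rw [norm_smul, Real.norm_eq_abs, mul_pow, sq_abs]
      ring
    rw [n1] at h2
    rw [n2] at h3
    nlinarith [h1, h2, h3, ht, ht1, hμ,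
      mul_le_mul_of_nonneg_left h2 ht.le,
      mul_le_mul_of_nonneg_left h3 (by linarith : (0:ℝ) ≤ 1 - t)]
  -- variational inequality for the exact prox point
  have hVI : 0 ≤ ⟪gx z (ystar x'), v' - vstar⟫ + α * ⟪vstar - v, v' - vstar⟫ := by
    apply aux_limit_nonneg (c := α / 2 * ‖v' - vstar‖ ^ 2) (by positivity)
    intro t ht ht1
    have hu : (1 - t) • vstar + t • v' ∈ X :=
      hXconv hvstarX hv'X (by linarith) ht.le (by ring)
    have e : (1 - t) • vstar + t • v' = vstar + t • (v' - vstar) := by module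
    rw [e] at hu
    have h1 := hvstar _ hu
    rw [inner_add_right, real_inner_smul_right,
      show vstar + t • (v' - vstar) - v = (vstar - v) + t • (v' - vstar) from by module,
      norm_add_sq_real, real_inner_smul_right] at h1
    have n1 : ‖t • (v' - vstar)‖ ^ 2 = t ^ 2 * ‖v' - vstar‖ ^ 2 := by
      rw [norm_smul, Real.norm_eq_abs, mul_pow, sq_abs]
    rw [n1] at h1
    nlinarith [h1, ht]
  -- Wolfe gap at vstar
  have hW := hv' vstar hvstarX
  rw [inner_add_left, real_inner_smul_left] at hW
  have esplit : ⟪v' - v, v' - vstar⟫ = ⟪vstar - v, v' - vstar⟫ + ‖v' - vstar‖ ^ 2 := by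
    rw [show v' - v = (vstar - v) + (v' - vstar) from by module, inner_add_left,
      real_inner_self_eq_norm_sq]
  have hmain : α * ‖v' - vstar‖ ^ 2 ≤
      ζ + ‖gx z (ystar x') - gx z y'‖ * ‖v' - vstar‖ := by
    have hCS := real_inner_le_norm (gx z (ystar x') - gx z y') (v' - vstar)
    rw [inner_sub_left] at hCS
    nlinarith [hVI, hW, esplit, hCS]
  -- gradient bound via smoothness
  have hsm := hsmooth z hz z hz (ystar x') hysY y' hy'Y
  rw [sub_self, norm_zero] at hsm
  have hG2 : ‖gx z (ystar x') - gx z y'‖ ^ 2 ≤ L ^ 2 * ‖y' - ystar x'‖ ^ 2 := by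
    rw [show ‖ystar x' - y'‖ = ‖y' - ystar x'‖ from norm_sub_rev _ _] at hsm
    nlinarith [hsm, sq_nonneg ‖gy z (ystar x') - gy z y'‖]
  have hdd : μ * ‖y' - ystar x'‖ ^ 2 ≤ 2 * εcgs := by
    have := hy' (ystar x') hysY
    linarith [hgrow]
  -- assemble
  have key : α ^ 2 * μ * ‖v' - vstar‖ ^ 2 ≤ 2 * L ^ 2 * εcgs + 2 * α * μ * ζ := by
    nlinarith [mul_le_mul_of_nonneg_left hmain (by positivity : (0:ℝ) ≤ 2 * α * μ),
      mul_le_mul_of_nonneg_left hG2 hμ.le,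
      mul_le_mul_of_nonneg_left hdd (sq_nonneg L),
      mul_nonneg hμ.le (sq_nonneg (‖gx z (ystar x') - gx z y'‖ - α * ‖v' - vstar‖))]
  have hrhs : 2 * (L / μ) * L * εcgs / α ^ 2 + 2 * ζ / α =
      (2 * L ^ 2 * εcgs + 2 * α * μ * ζ) / (α ^ 2 * μ) := by
    field_simp
  rw [hrhs, norm_sub_rev, ← Real.sqrt_sq (norm_nonneg (v' - vstar))]
  apply Real.sqrt_le_sqrt
  rw [le_div_iff₀ (by positivity)]
  nlinarith [key]
end

section
/- Let 0 ≤ γ ≤ 1 and let x_{k−1}, v_{k−1}, v_k ∈ X with z_k = (1−γ)x_{k−1} + γ v_{k−1} and x_k = (1−γ)x_{k−1} + γ v_k. Then for every x̃ ∈ X and every y ∈ Y: f(x_k, y) ≤ (1−γ) f(x_{k−1}, y) + γ f(x̃, y) + γ ⟨∇_x f(z_k, y), v_k − x̃⟩ + (γ²L/2)‖v_k − v_{k−1}‖². -/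
open scoped RealInnerProductSpace

lemma descent_lemma_aux {E : Type*} [NormedAddCommGroup E] [InnerProductSpace ℝ E] [CompleteSpace E]
    (f : E → ℝ) (g : E → E) (hg : ∀ x, HasGradientAt f (g x) x)
    (s : Set E) (hs : Convex ℝ s) (L : ℝ) (hL : 0 ≤ L)
    (hlip : ∀ x ∈ s, ∀ x' ∈ s, ‖g x - g x'‖ ≤ L * ‖x - x'‖)
    (a b : E) (ha : a ∈ s) (hb : b ∈ s) :
    f b ≤ f a + ⟪g a, b - a⟫ + L / 2 * ‖b - a‖ ^ 2 := by
  set ψ : ℝ → ℝ := fun t => f (a + t • (b - a)) - t * ⟪g a, b - a⟫ - L * t ^ 2 / 2 * ‖b - a‖ ^ 2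
    with hψ
  have hmem : ∀ t ∈ Set.Icc (0:ℝ) 1, a + t • (b - a) ∈ s := by
    intro t ht
    have : (1 - t) • a + t • b ∈ s := hs ha hb (by linarith [ht.2]) ht.1 (by ring)
    convert this using 1
    module
  have hderiv : ∀ t : ℝ, HasDerivAt ψ
      (⟪g (a + t • (b - a)), b - a⟫ - ⟪g a, b - a⟫ - L * t * ‖b - a‖ ^ 2) t := by
    intro t
    have hline : HasDerivAt (fun t : ℝ => a + t • (b - a)) (b - a) t := by
      simpa using ((hasDerivAt_id t).smul_const (b - a)).const_add a
    have hF := (hg (a + t • (b - a))).hasFDerivAt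
    have hcomp := hF.comp_hasDerivAt t hline
    simp only [InnerProductSpace.toDual_apply_apply] at hcomp
    have h2 : HasDerivAt (fun t : ℝ => t * ⟪g a, b - a⟫ + L * t ^ 2 / 2 * ‖b - a‖ ^ 2)
        (⟪g a, b - a⟫ + L * t * ‖b - a‖ ^ 2) t := by
      have := ((hasDerivAt_id t).mul_const (⟪g a, b - a⟫ : ℝ)).add
        ((((hasDerivAt_pow 2 t).const_mul L).div_const 2).mul_const (‖b - a‖ ^ 2))
      convert this using 1
      · rfl
      · rfl
      · rfl
      ring
    have := hcomp.sub h2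
    convert this using 1
    · rfl
    · rfl
    · ext u; simp [hψ]; ring
    · ring
  have hanti : AntitoneOn ψ (Set.Icc (0:ℝ) 1) := by
    apply antitoneOn_of_deriv_nonpos (convex_Icc 0 1)
    · exact fun t _ => ((hderiv t).differentiableAt).continuousAt.continuousWithinAt
    · exact fun t _ => ((hderiv t).differentiableAt).differentiableWithinAt
    · intro t ht
      rw [interior_Icc] at ht
      rw [(hderiv t).deriv]
      have hm : a + t • (b - a) ∈ s := hmem t ⟨le_of_lt ht.1, le_of_lt ht.2⟩
      have h1 : ⟪g (a + t • (b - a)), b - a⟫ - ⟪g a, b - a⟫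
          = ⟪g (a + t • (b - a)) - g a, b - a⟫ := by rw [inner_sub_left]
      have h2 : ⟪g (a + t • (b - a)) - g a, b - a⟫ ≤
          ‖g (a + t • (b - a)) - g a‖ * ‖b - a‖ := real_inner_le_norm _ _
      have h3 : ‖g (a + t • (b - a)) - g a‖ ≤ L * ‖a + t • (b - a) - a‖ :=
        hlip _ hm a ha
      have h4 : ‖a + t • (b - a) - a‖ = t * ‖b - a‖ := by
        rw [add_sub_cancel_left, norm_smul, Real.norm_eq_abs, abs_of_pos ht.1]
      have h5 := mul_le_mul_of_nonneg_right h3 (norm_nonneg (b - a))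
      rw [h4] at h5
      nlinarith [h1, h2, h5]
  have := hanti (Set.mem_Icc.2 ⟨le_refl 0, zero_le_one⟩) (Set.mem_Icc.2 ⟨zero_le_one, le_refl 1⟩)
    zero_le_one
  simp [hψ] at this
  linarith

/-- For `0 ≤ γ ≤ 1` and `z_k = (1−γ)x_{k−1} + γv_{k−1}`,
`x_k = (1−γ)x_{k−1} + γv_k`, smoothness and convexity in `x` give, for all `x̃ ∈ X`, `y ∈ Y`:
`f(x_k,y) ≤ (1−γ)f(x_{k−1},y) + γf(x̃,y) + γ⟪∇ₓf(z_k,y), v_k − x̃⟫ + (γ²L/2)‖v_k − v_{k−1}‖²`. -/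
theorem smoothness_convexity_step_bound
    {n m : ℕ}
    (X : Set (EuclideanSpace ℝ (Fin n))) (Y : Set (EuclideanSpace ℝ (Fin m)))
    (hXconv : Convex ℝ X) (hXcomp : IsCompact X) (hXne : X.Nonempty)
    (hYconv : Convex ℝ Y) (hYcomp : IsCompact Y) (hYne : Y.Nonempty)
    (f : EuclideanSpace ℝ (Fin n) → EuclideanSpace ℝ (Fin m) → ℝ)
    (gx : EuclideanSpace ℝ (Fin n) → EuclideanSpace ℝ (Fin m) → EuclideanSpace ℝ (Fin n))
    (gy : EuclideanSpace ℝ (Fin n) → EuclideanSpace ℝ (Fin m) → EuclideanSpace ℝ (Fin m))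
    (hgx : ∀ x y, HasGradientAt (fun x' => f x' y) (gx x y) x)
    (hgy : ∀ x y, HasGradientAt (fun y' => f x y') (gy x y) y)
    (L μ : ℝ) (hμ : 0 < μ) (hμL : μ ≤ L)
    (hsmooth : ∀ x₁ ∈ X, ∀ x₂ ∈ X, ∀ y₁ ∈ Y, ∀ y₂ ∈ Y,
      ‖gx x₁ y₁ - gx x₂ y₂‖ ^ 2 + ‖gy x₁ y₁ - gy x₂ y₂‖ ^ 2 ≤
        L ^ 2 * (‖x₁ - x₂‖ ^ 2 + ‖y₁ - y₂‖ ^ 2))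
    (hconv : ∀ y ∈ Y, ∀ x₁ ∈ X, ∀ x₂ ∈ X,
      f x₁ y - f x₂ y ≥ ⟪gx x₂ y, x₁ - x₂⟫)
    (hconc : ∀ x ∈ X, ∀ y₁ ∈ Y, ∀ y₂ ∈ Y,
      f x y₁ - f x y₂ ≤ ⟪gy x y₂, y₁ - y₂⟫ - μ / 2 * ‖y₁ - y₂‖ ^ 2)
    (γ : ℝ) (hγ0 : 0 ≤ γ) (hγ1 : γ ≤ 1)
    (xprev vprev vk zk xk : EuclideanSpace ℝ (Fin n))
    (hxprev : xprev ∈ X) (hvprev : vprev ∈ X) (hvk : vk ∈ X)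
    (hzk : zk = (1 - γ) • xprev + γ • vprev)
    (hxk : xk = (1 - γ) • xprev + γ • vk) :
    ∀ xtilde ∈ X, ∀ y ∈ Y,
      f xk y ≤ (1 - γ) * f xprev y + γ * f xtilde y +
        γ * ⟪gx zk y, vk - xtilde⟫ + γ ^ 2 * L / 2 * ‖vk - vprev‖ ^ 2 := by
  intro xtilde hxt y hy
  have hL : 0 ≤ L := le_trans (le_of_lt hμ) hμL
  have hzkX : zk ∈ X := hzk ▸ hXconv hxprev hvprev (by linarith) hγ0 (by ring)
  have hxkX : xk ∈ X := hxk ▸ hXconv hxprev hvk (by linarith) hγ0 (by ring)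
  -- Lipschitz bound for gx in its first argument on X
  have hlip : ∀ x₁ ∈ X, ∀ x₂ ∈ X, ‖gx x₁ y - gx x₂ y‖ ≤ L * ‖x₁ - x₂‖ := by
    intro x₁ h₁ x₂ h₂
    have h := hsmooth x₁ h₁ x₂ h₂ y hy y hy
    simp only [sub_self, norm_zero] at h
    have h' : ‖gx x₁ y - gx x₂ y‖ ^ 2 ≤ (L * ‖x₁ - x₂‖) ^ 2 := by
      nlinarith [sq_nonneg ‖gy x₁ y - gy x₂ y‖]
    exact le_of_pow_le_pow_left₀ two_ne_zero (mul_nonneg hL (norm_nonneg _)) h'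
  -- descent lemma from zk to xk
  have hdesc := descent_lemma_aux (fun x' => f x' y) (fun x' => gx x' y)
    (fun x' => hgx x' y) X hXconv L hL hlip zk xk hzkX hxkX
  have hdiff : xk - zk = γ • (vk - vprev) := by rw [hxk, hzk]; module
  have hnorm : ‖xk - zk‖ ^ 2 = γ ^ 2 * ‖vk - vprev‖ ^ 2 := by
    rw [hdiff, norm_smul, Real.norm_eq_abs, abs_of_nonneg hγ0, mul_pow]
  have hsplit : xk - zk = (1 - γ) • (xprev - zk) + γ • (xtilde - zk) + γ • (vk - xtilde) := by
    rw [hxk, hzk]; module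
  have hinner : ⟪gx zk y, xk - zk⟫ =
      (1 - γ) * ⟪gx zk y, xprev - zk⟫ + γ * ⟪gx zk y, xtilde - zk⟫ +
        γ * ⟪gx zk y, vk - xtilde⟫ := by
    rw [hsplit, inner_add_right, inner_add_right, real_inner_smul_right,
      real_inner_smul_right, real_inner_smul_right]
  have hA : ⟪gx zk y, xprev - zk⟫ ≤ f xprev y - f zk y := hconv y hy xprev hxprev zk hzkX
  have hB : ⟪gx zk y, xtilde - zk⟫ ≤ f xtilde y - f zk y := hconv y hy xtilde hxt zk hzkX
  have h1γ : 0 ≤ 1 - γ := by linarith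
  nlinarith [hdesc, mul_le_mul_of_nonneg_left hA h1γ, mul_le_mul_of_nonneg_left hB hγ0]
end

section
/- Let 0 ≤ γ ≤ 1, α ≥ Lγ, ζ ≥ 0, and let x_{k−1}, v_{k−1}, v_k ∈ X with z_k = (1−γ)x_{k−1} + γ v_{k−1} and x_k = (1−γ)x_{k−1} + γ v_k. Suppose max_{x∈X} ⟨∇_x f(z_k, y_k) + α(v_k − v_{k−1}), v_k − x⟩ ≤ ζ for some y_k ∈ Y. Then for every x̃ ∈ X: f(x_k, y_k) − f(x̃, y_k) ≤ (1−γ)( f(x_{k−1}, y_k) − f(x̃, y_k) ) + γζ + (γα/2)( ‖v_{k−1} − x̃‖² − ‖v_k − x̃‖² ) + (γ/2)(Lγ − α)‖v_k − v_{k−1}‖². -/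
open scoped RealInnerProductSpace

/-- Descent lemma along a segment: if `f` has gradient `g` everywhere and the gradient
satisfies a Lipschitz-type bound along the segment from `a` to `b`, then
`f b ≤ f a + ⟪g a, b - a⟫ + L/2 * ‖b - a‖^2`. -/
lemma descent_lemma_segment {n : ℕ}
    (f : EuclideanSpace ℝ (Fin n) → ℝ) (g : EuclideanSpace ℝ (Fin n) → EuclideanSpace ℝ (Fin n))
    (hg : ∀ x, HasGradientAt f (g x) x)
    (L : ℝ) (a b : EuclideanSpace ℝ (Fin n))
    (hlip : ∀ t ∈ Set.Icc (0:ℝ) 1, ‖g (a + t • (b - a)) - g a‖ ≤ L * (t * ‖b - a‖)) :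
    f b ≤ f a + ⟪g a, b - a⟫ + L / 2 * ‖b - a‖ ^ 2 := by
  set c : ℝ → EuclideanSpace ℝ (Fin n) := fun t => a + t • (b - a) with hc
  set φ : ℝ → ℝ := fun t =>
    f (c t) - t * ⟪g a, b - a⟫ - L / 2 * t ^ 2 * ‖b - a‖ ^ 2 with hφ
  have hcder : ∀ t : ℝ, HasDerivAt c (b - a) t := by
    intro t
    have h1 : HasDerivAt (fun t : ℝ => t • (b - a)) ((1:ℝ) • (b - a)) t :=
      (hasDerivAt_id t).smul_const (b - a)
    have h2 : HasDerivAt (fun t : ℝ => t • (b - a)) (b - a) t := by simpa using h1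
    exact h2.const_add a
  have hfder : ∀ t : ℝ, HasDerivAt (fun s => f (c s)) (⟪g (c t), b - a⟫) t := by
    intro t
    have hF : HasFDerivAt f (InnerProductSpace.toDual ℝ _ (g (c t))) (c t) := hg (c t)
    have := hF.comp_hasDerivAt t (hcder t)
    simp only [InnerProductSpace.toDual_apply_apply] at this
    exact this
  have hφder : ∀ t : ℝ,
      HasDerivAt φ (⟪g (c t), b - a⟫ - ⟪g a, b - a⟫ - L * t * ‖b - a‖ ^ 2) t := by
    intro t
    have h1 : HasDerivAt (fun s : ℝ => s * ⟪g a, b - a⟫) (⟪g a, b - a⟫) t := by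
      simpa using (hasDerivAt_id t).mul_const (⟪g a, b - a⟫)
    have h2 : HasDerivAt (fun s : ℝ => L / 2 * s ^ 2 * ‖b - a‖ ^ 2)
        (L * t * ‖b - a‖ ^ 2) t := by
      have := ((hasDerivAt_pow 2 t).const_mul (L / 2)).mul_const (‖b - a‖ ^ 2)
      exact this.congr_deriv (by simp only [Nat.cast_ofNat, show (2:ℕ) - 1 = 1 from rfl, pow_one]; ring)
    exact ((hfder t).sub h1).sub h2
  have hmono : AntitoneOn φ (Set.Icc (0:ℝ) 1) := by
    apply antitoneOn_of_deriv_nonpos (convex_Icc 0 1)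
    · exact fun t _ => (hφder t).differentiableAt.continuousAt.continuousWithinAt
    · exact fun t _ => ((hφder t).differentiableAt).differentiableWithinAt
    · intro t ht
      rw [interior_Icc] at ht
      rw [(hφder t).deriv]
      have ht0 : (0:ℝ) ≤ t := le_of_lt ht.1
      have ht1 : t ≤ 1 := le_of_lt ht.2
      have hinner : ⟪g (c t), b - a⟫ - ⟪g a, b - a⟫ = ⟪g (c t) - g a, b - a⟫ := by
        rw [inner_sub_left]
      have h1 : ⟪g (c t) - g a, b - a⟫ ≤ ‖g (c t) - g a‖ * ‖b - a‖ :=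
        real_inner_le_norm _ _
      have h2 : ‖g (c t) - g a‖ ≤ L * (t * ‖b - a‖) := hlip t ⟨ht0, ht1⟩
      have h3 : ‖g (c t) - g a‖ * ‖b - a‖ ≤ L * (t * ‖b - a‖) * ‖b - a‖ :=
        mul_le_mul_of_nonneg_right h2 (norm_nonneg _)
      nlinarith [norm_nonneg (b - a)]
  have hkey : φ 1 ≤ φ 0 :=
    hmono (Set.mem_Icc.2 ⟨le_refl 0, zero_le_one⟩) (Set.mem_Icc.2 ⟨zero_le_one, le_refl 1⟩)
      zero_le_one
  have hc1 : c 1 = b := by simp [hc]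
  have hc0 : c 0 = a := by simp [hc]
  simp only [hφ, hc1, hc0] at hkey
  nlinarith [hkey]

/-- With `0 ≤ γ ≤ 1`, `α ≥ Lγ`, `ζ ≥ 0`, `z_k = (1−γ)x_{k−1} + γv_{k−1}`,
`x_k = (1−γ)x_{k−1} + γv_k`, and the Wolfe-gap condition
`⟪∇ₓf(z_k,y_k) + α(v_k − v_{k−1}), v_k − x⟫ ≤ ζ` for all `x ∈ X`, one has for every `x̃ ∈ X`:
`f(x_k,y_k) − f(x̃,y_k) ≤ (1−γ)(f(x_{k−1},y_k) − f(x̃,y_k)) + γζ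
  + (γα/2)(‖v_{k−1}−x̃‖² − ‖v_k−x̃‖²) + (γ/2)(Lγ−α)‖v_k−v_{k−1}‖²`. -/
theorem per_iteration_descent_bound
    {n m : ℕ}
    (X : Set (EuclideanSpace ℝ (Fin n))) (Y : Set (EuclideanSpace ℝ (Fin m)))
    (hXconv : Convex ℝ X) (hXcomp : IsCompact X) (hXne : X.Nonempty)
    (hYconv : Convex ℝ Y) (hYcomp : IsCompact Y) (hYne : Y.Nonempty)
    (f : EuclideanSpace ℝ (Fin n) → EuclideanSpace ℝ (Fin m) → ℝ)
    (gx : EuclideanSpace ℝ (Fin n) → EuclideanSpace ℝ (Fin m) → EuclideanSpace ℝ (Fin n))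
    (gy : EuclideanSpace ℝ (Fin n) → EuclideanSpace ℝ (Fin m) → EuclideanSpace ℝ (Fin m))
    (hgx : ∀ x y, HasGradientAt (fun x' => f x' y) (gx x y) x)
    (hgy : ∀ x y, HasGradientAt (fun y' => f x y') (gy x y) y)
    (L μ : ℝ) (hμ : 0 < μ) (hμL : μ ≤ L)
    (hsmooth : ∀ x₁ ∈ X, ∀ x₂ ∈ X, ∀ y₁ ∈ Y, ∀ y₂ ∈ Y,
      ‖gx x₁ y₁ - gx x₂ y₂‖ ^ 2 + ‖gy x₁ y₁ - gy x₂ y₂‖ ^ 2 ≤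
        L ^ 2 * (‖x₁ - x₂‖ ^ 2 + ‖y₁ - y₂‖ ^ 2))
    (hconv : ∀ y ∈ Y, ∀ x₁ ∈ X, ∀ x₂ ∈ X,
      f x₁ y - f x₂ y ≥ ⟪gx x₂ y, x₁ - x₂⟫)
    (hconc : ∀ x ∈ X, ∀ y₁ ∈ Y, ∀ y₂ ∈ Y,
      f x y₁ - f x y₂ ≤ ⟪gy x y₂, y₁ - y₂⟫ - μ / 2 * ‖y₁ - y₂‖ ^ 2)
    (γ α ζ : ℝ) (hγ0 : 0 ≤ γ) (hγ1 : γ ≤ 1) (hαγ : L * γ ≤ α) (hζ : 0 ≤ ζ)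
    (xprev vprev vk zk xk : EuclideanSpace ℝ (Fin n))
    (hxprev : xprev ∈ X) (hvprev : vprev ∈ X) (hvk : vk ∈ X)
    (hzk : zk = (1 - γ) • xprev + γ • vprev)
    (hxk : xk = (1 - γ) • xprev + γ • vk)
    (yk : EuclideanSpace ℝ (Fin m)) (hyk : yk ∈ Y)
    (hwolfe : ∀ x ∈ X, ⟪gx zk yk + α • (vk - vprev), vk - x⟫ ≤ ζ) :
    ∀ xtilde ∈ X,
      f xk yk - f xtilde yk ≤
        (1 - γ) * (f xprev yk - f xtilde yk) + γ * ζ +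
          γ * α / 2 * (‖vprev - xtilde‖ ^ 2 - ‖vk - xtilde‖ ^ 2) +
          γ / 2 * (L * γ - α) * ‖vk - vprev‖ ^ 2 := by
  intro xt hxt
  have hL0 : 0 < L := lt_of_lt_of_le hμ hμL
  have hzkX : zk ∈ X := by
    rw [hzk]; exact hXconv hxprev hvprev (by linarith) hγ0 (by ring)
  have hxkX : xk ∈ X := by
    rw [hxk]; exact hXconv hxprev hvk (by linarith) hγ0 (by ring)
  -- Lipschitz bound for gx on X (with y = yk)
  have hlipX : ∀ x₁ ∈ X, ∀ x₂ ∈ X, ‖gx x₁ yk - gx x₂ yk‖ ≤ L * ‖x₁ - x₂‖ := by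
    intro x₁ h₁ x₂ h₂
    have h := hsmooth x₁ h₁ x₂ h₂ yk hyk yk hyk
    simp only [sub_self, norm_zero] at h
    have h' : ‖gx x₁ yk - gx x₂ yk‖ ^ 2 ≤ (L * ‖x₁ - x₂‖) ^ 2 := by
      nlinarith [sq_nonneg ‖gy x₁ yk - gy x₂ yk‖]
    exact le_of_pow_le_pow_left₀ two_ne_zero (by positivity) h'
  -- the increment
  have hdiff : xk - zk = γ • (vk - vprev) := by
    rw [hxk, hzk]; module
  -- descent lemma along segment from zk to xk
  have hdesc : f xk yk ≤ f zk yk + ⟪gx zk yk, xk - zk⟫ + L / 2 * ‖xk - zk‖ ^ 2 := by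
    apply descent_lemma_segment (fun x => f x yk) (fun x => gx x yk)
      (fun x => hgx x yk) L zk xk
    intro t ht
    have hmem : zk + t • (xk - zk) ∈ X := by
      have : zk + t • (xk - zk) = (1 - t) • zk + t • xk := by module
      rw [this]
      exact hXconv hzkX hxkX (by linarith [ht.2]) ht.1 (by ring)
    have := hlipX _ hmem zk hzkX
    calc ‖gx (zk + t • (xk - zk)) yk - gx zk yk‖ ≤ L * ‖zk + t • (xk - zk) - zk‖ := this
      _ = L * (t * ‖xk - zk‖) := by
          rw [add_sub_cancel_left, norm_smul, Real.norm_eq_abs, abs_of_nonneg ht.1]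
  -- norm of increment
  have hnorm : ‖xk - zk‖ ^ 2 = γ ^ 2 * ‖vk - vprev‖ ^ 2 := by
    rw [hdiff, norm_smul, Real.norm_eq_abs, abs_of_nonneg hγ0]; ring
  -- decompose inner product
  have hvecid : xk - zk = (1 - γ) • (xprev - zk) + γ • (vk - xt) + γ • (xt - zk) := by
    rw [hxk, hzk]; module
  have hinnersplit : ⟪gx zk yk, xk - zk⟫ =
      (1 - γ) * ⟪gx zk yk, xprev - zk⟫ + γ * ⟪gx zk yk, vk - xt⟫ + γ * ⟪gx zk yk, xt - zk⟫ := by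
    rw [hvecid, inner_add_right, inner_add_right, real_inner_smul_right,
      real_inner_smul_right, real_inner_smul_right]
  -- convexity bounds
  have h2 : f xt yk - f zk yk ≥ ⟪gx zk yk, xt - zk⟫ := hconv yk hyk xt hxt zk hzkX
  have h3 : f xprev yk - f zk yk ≥ ⟪gx zk yk, xprev - zk⟫ := hconv yk hyk xprev hxprev zk hzkX
  -- Wolfe gap
  have h4 : ⟪gx zk yk, vk - xt⟫ + α * ⟪vk - vprev, vk - xt⟫ ≤ ζ := by
    have := hwolfe xt hxt
    rwa [inner_add_left, real_inner_smul_left] at this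
  -- polarization identity
  have h5 : ⟪vk - vprev, vk - xt⟫ =
      (‖vk - vprev‖ ^ 2 + ‖vk - xt‖ ^ 2 - ‖vprev - xt‖ ^ 2) / 2 := by
    simp only [← real_inner_self_eq_norm_sq, inner_sub_left, inner_sub_right]
    linarith [real_inner_comm vk vprev, real_inner_comm vk xt, real_inner_comm vprev xt]
  rw [hinnersplit, hnorm] at hdesc
  have m2 : γ * ⟪gx zk yk, xt - zk⟫ ≤ γ * (f xt yk - f zk yk) :=
    mul_le_mul_of_nonneg_left h2 hγ0
  have m3 : (1 - γ) * ⟪gx zk yk, xprev - zk⟫ ≤ (1 - γ) * (f xprev yk - f zk yk) :=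
    mul_le_mul_of_nonneg_left h3 (by linarith)
  have m4 : γ * (⟪gx zk yk, vk - xt⟫ + α * ⟪vk - vprev, vk - xt⟫) ≤ γ * ζ :=
    mul_le_mul_of_nonneg_left h4 hγ0
  rw [h5] at m4
  nlinarith [hdesc, m2, m3, m4]
end
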